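/- arXiv:2110.03673 — 4 statements merged into one kernel-verified Lean document; each statement's English description precedes it below -/
import Mathlib

section
/- Let d ≥ 1, n ≥ 1, let ω_1, …, ω_n be unit vectors in ℝ^d, a_1, …, a_n, b_1, …, b_n ∈ ℝ, and define f : ℝ^d → ℝ by f(x) = (1/n) Σ_{i=1}^n a_i (⟨ω_i, x⟩ − b_i)_+. Suppose f is not an affine function, i.e. there are no w ∈ ℝ^d and c ∈ ℝ with f(x) = ⟨w, x⟩ + c for all x. Then there is no complex finite Borel measure ν on ℝ^d with ∫_{ℝ^d} ‖ξ‖₂² d|ν|(ξ) < ∞ such that f(x) = (2π)^{−d/2} ∫_{ℝ^d} e^{i⟨ξ, x⟩} dν(ξ) for all x ∈ ℝ^d. In other words, a non-affine finite-width two-layer ReLU network admits no Fourier representation with finite quantity C_f := (2π)^{−d/2} ∫ ‖ξ‖₂² d|ν|(ξ). -/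
open MeasureTheory
open scoped RealInnerProductSpace

lemma max_half (a : ℝ) : max a 0 = (a + |a|) / 2 := by
  rcases abs_cases a with ⟨h1, h2⟩ | ⟨h1, h2⟩
  · rw [max_eq_left h2, h1]; ring
  · rw [max_eq_right h2.le, h1]; ring

lemma relu_sd (s u : ℝ) :
    max (s + u) 0 + max (s - u) 0 - 2 * max s 0 = max (|u| - |s|) 0 := by
  rw [max_half, max_half, max_half, max_half]
  rcases abs_cases (s + u) with ⟨h1, _⟩ | ⟨h1, _⟩ <;>
    rcases abs_cases (s - u) with ⟨h2, _⟩ | ⟨h2, _⟩ <;>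
    rcases abs_cases s with ⟨h3, _⟩ | ⟨h3, _⟩ <;>
    rcases abs_cases u with ⟨h4, _⟩ | ⟨h4, _⟩ <;>
    rcases abs_cases (|u| - |s|) with ⟨h5, _⟩ | ⟨h5, _⟩ <;>
    rw [h1, h2, h3, h4] at * <;> linarith

lemma cos_bound (r : ℝ) : 2 - 2 * Real.cos r ≤ r ^ 2 := by
  have h1 : |Real.sin (r / 2)| = Real.sqrt ((1 - Real.cos r) / 2) := Real.abs_sin_half r
  have h2 : Real.sin (r / 2) ^ 2 = (1 - Real.cos r) / 2 := by
    rw [← sq_abs, h1, Real.sq_sqrt]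
    have := Real.cos_le_one r; linarith
  have h3 : Real.sin (r / 2) ^ 2 ≤ (r / 2) ^ 2 := by
    rw [← sq_abs, ← sq_abs (r / 2)]
    exact pow_le_pow_left₀ (abs_nonneg _) (Real.abs_sin_le_abs) 2
  nlinarith

lemma key_exp_bound (p q : ℝ) :
    ‖Complex.exp (Complex.I * ((p : ℂ) + q)) + Complex.exp (Complex.I * ((p : ℂ) - q)) -
      2 * Complex.exp (Complex.I * p)‖ ≤ q ^ 2 := by
  have factor : Complex.exp (Complex.I * ((p : ℂ) + q)) + Complex.exp (Complex.I * ((p : ℂ) - q)) -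
      2 * Complex.exp (Complex.I * p) =
      Complex.exp (Complex.I * p) * ((2 * Real.cos q - 2 : ℝ) : ℂ) := by
    have e1 : Complex.I * ((p : ℂ) + q) = (p : ℂ) * Complex.I + (q : ℂ) * Complex.I := by ring
    have e2 : Complex.I * ((p : ℂ) - q) = (p : ℂ) * Complex.I + (-q : ℂ) * Complex.I := by ring
    have e3 : Complex.I * (p : ℂ) = (p : ℂ) * Complex.I := by ring
    rw [e1, e2, e3, Complex.exp_add, Complex.exp_add, Complex.exp_mul_I, Complex.exp_mul_I]
    rw [show ((-q : ℂ)) = ((-q : ℝ) : ℂ) by push_cast; ring]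
    rw [Complex.exp_mul_I]
    push_cast [Complex.cos_neg, Complex.sin_neg, Complex.ofReal_cos, Complex.ofReal_sin]
    ring
  rw [factor, norm_mul]
  have h1 : ‖Complex.exp (Complex.I * p)‖ = 1 := by
    rw [mul_comm]; exact Complex.norm_exp_ofReal_mul_I p
  rw [h1, one_mul, Complex.norm_real, Real.norm_eq_abs]
  have := Real.cos_le_one q
  rw [abs_of_nonpos (by linarith)]
  have := cos_bound q
  linarith

lemma mul_factor_max (A u T' : ℝ) (hu : 0 ≤ u) :
    A * max (u * (1 - T')) 0 = (A * u) * max (1 - T') 0 := by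
  conv_rhs => rw [mul_assoc, mul_max_of_nonneg _ _ hu, mul_zero]

/-- A non-affine finite-width two-layer ReLU network admits no Fourier representation by a
complex finite Borel measure `ν` with `∫ ‖ξ‖² d|ν|(ξ) < ∞`.  The complex measure is encoded
in polar form `dν = h dμ` with `μ = |ν|` a finite positive measure and `h` a measurable
density of modulus one. -/
theorem stmt6 (d n : ℕ) (hd : 1 ≤ d) (hn : 1 ≤ n)
    (ω : Fin n → EuclideanSpace ℝ (Fin d)) (hω : ∀ i, ‖ω i‖ = 1)
    (a b : Fin n → ℝ) (f : EuclideanSpace ℝ (Fin d) → ℝ)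
    (hf : ∀ x, f x = (1 / n : ℝ) * ∑ i, a i * max (⟪ω i, x⟫ - b i) 0)
    (hnotaff : ¬ ∃ (w : EuclideanSpace ℝ (Fin d)) (c : ℝ), ∀ x, f x = ⟪w, x⟫ + c) :
    ¬ ∃ (μ : Measure (EuclideanSpace ℝ (Fin d))) (h : EuclideanSpace ℝ (Fin d) → ℂ),
        IsFiniteMeasure μ ∧ Measurable h ∧ (∀ ξ, ‖h ξ‖ = 1) ∧
        Integrable (fun ξ => ‖ξ‖ ^ 2) μ ∧
        ∀ x, (f x : ℂ) = ((2 * Real.pi) ^ ((d : ℝ) / 2))⁻¹ •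
          ∫ ξ, Complex.exp (Complex.I * (⟪ξ, x⟫ : ℂ)) * h ξ ∂μ := by
  rintro ⟨μ, h, hfin, hmeas, hnorm, hxint, hrep⟩
  set c : ℝ := ((2 * Real.pi) ^ ((d : ℝ) / 2))⁻¹ with hc
  have hc0 : 0 ≤ c := inv_nonneg.2 (Real.rpow_nonneg (by positivity) _)
  set B : ℝ := ∫ ξ, ‖ξ‖ ^ 2 ∂μ with hBdef
  have hn0 : (0 : ℝ) < n := by exact_mod_cast hn
  -- integrability of the oscillatory integrand
  have hintg : ∀ y : EuclideanSpace ℝ (Fin d),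
      Integrable (fun ξ => Complex.exp (Complex.I * (⟪ξ, y⟫ : ℂ)) * h ξ) μ := by
    intro y
    have hm : Measurable fun ξ : EuclideanSpace ℝ (Fin d) =>
        Complex.exp (Complex.I * (⟪ξ, y⟫ : ℂ)) * h ξ := by
      apply Measurable.mul _ hmeas
      apply Complex.measurable_exp.comp
      exact measurable_const.mul
        (Complex.measurable_ofReal.comp (continuous_id.inner continuous_const).measurable)
    refine (integrable_const (1 : ℝ)).mono' hm.aestronglyMeasurable ?_
    filter_upwards with ξ
    rw [norm_mul, hnorm, mul_one, mul_comm]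
    exact le_of_eq (Complex.norm_exp_ofReal_mul_I _)
  -- second-difference formula for f
  have hQsum : ∀ x v : EuclideanSpace ℝ (Fin d), f (x + v) + f (x - v) - 2 * f x
      = (1 / n : ℝ) * ∑ i, a i * max (|⟪ω i, v⟫| - |⟪ω i, x⟫ - b i|) 0 := by
    intro x v
    rw [hf, hf, hf,
      show ∀ A B C : ℝ, (1 / n : ℝ) * A + (1 / n : ℝ) * B - 2 * ((1 / n : ℝ) * C)
        = (1 / n : ℝ) * (A + B - 2 * C) from fun A B C => by ring]
    congr 1
    rw [← Finset.sum_add_distrib, Finset.mul_sum, ← Finset.sum_sub_distrib]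
    apply Finset.sum_congr rfl
    intro i _
    rw [inner_add_right, inner_sub_right,
      show ⟪ω i, x⟫ + ⟪ω i, v⟫ - b i = (⟪ω i, x⟫ - b i) + ⟪ω i, v⟫ from by ring,
      show ⟪ω i, x⟫ - ⟪ω i, v⟫ - b i = (⟪ω i, x⟫ - b i) - ⟪ω i, v⟫ from by ring,
      ← relu_sd (⟪ω i, x⟫ - b i) (⟪ω i, v⟫)]
    ring
  -- Fourier bound for second differences
  have hbound : ∀ (x v : EuclideanSpace ℝ (Fin d)) (t : ℝ),
      |f (x + t • v) + f (x - t • v) - 2 * f x| ≤ c * (‖v‖ ^ 2 * t ^ 2 * B) := by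
    intro x v t
    have hsplit : (∫ ξ, Complex.exp (Complex.I * (⟪ξ, x + t • v⟫ : ℂ)) * h ξ ∂μ)
          + (∫ ξ, Complex.exp (Complex.I * (⟪ξ, x - t • v⟫ : ℂ)) * h ξ ∂μ)
          - 2 * (∫ ξ, Complex.exp (Complex.I * (⟪ξ, x⟫ : ℂ)) * h ξ ∂μ)
        = ∫ ξ, (Complex.exp (Complex.I * (⟪ξ, x + t • v⟫ : ℂ)) * h ξ
            + Complex.exp (Complex.I * (⟪ξ, x - t • v⟫ : ℂ)) * h ξ
            - 2 * (Complex.exp (Complex.I * (⟪ξ, x⟫ : ℂ)) * h ξ)) ∂μ := by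
      rw [← integral_const_mul, ← integral_add (hintg _) (hintg _)]
      exact (integral_sub ((hintg (x + t • v)).add (hintg (x - t • v)))
        ((hintg x).const_mul 2)).symm
    have hQc : ((f (x + t • v) : ℂ) + (f (x - t • v) : ℂ) - 2 * (f x : ℂ))
        = c • ∫ ξ, (Complex.exp (Complex.I * (⟪ξ, x + t • v⟫ : ℂ)) * h ξ
            + Complex.exp (Complex.I * (⟪ξ, x - t • v⟫ : ℂ)) * h ξ
            - 2 * (Complex.exp (Complex.I * (⟪ξ, x⟫ : ℂ)) * h ξ)) ∂μ := by
      rw [hrep, hrep, hrep, ← hsplit, smul_sub, smul_add, mul_smul_comm]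
    have hnormeq : |f (x + t • v) + f (x - t • v) - 2 * f x|
        = ‖((f (x + t • v) : ℂ) + (f (x - t • v) : ℂ) - 2 * (f x : ℂ))‖ := by
      rw [show ((f (x + t • v) : ℂ) + (f (x - t • v) : ℂ) - 2 * (f x : ℂ))
        = ((f (x + t • v) + f (x - t • v) - 2 * f x : ℝ) : ℂ) from by push_cast; ring,
        Complex.norm_real, Real.norm_eq_abs]
    rw [hnormeq, hQc, norm_smul, Real.norm_eq_abs, abs_of_nonneg hc0]
    have hle : ‖∫ ξ, (Complex.exp (Complex.I * (⟪ξ, x + t • v⟫ : ℂ)) * h ξ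
            + Complex.exp (Complex.I * (⟪ξ, x - t • v⟫ : ℂ)) * h ξ
            - 2 * (Complex.exp (Complex.I * (⟪ξ, x⟫ : ℂ)) * h ξ)) ∂μ‖
        ≤ ∫ ξ, (‖v‖ ^ 2 * t ^ 2) * ‖ξ‖ ^ 2 ∂μ := by
      apply norm_integral_le_of_norm_le (hxint.const_mul _)
      filter_upwards with ξ
      have e1 : (⟪ξ, x + t • v⟫ : ℝ) = ⟪ξ, x⟫ + t * ⟪ξ, v⟫ := by
        rw [inner_add_right, real_inner_smul_right]
      have e2 : (⟪ξ, x - t • v⟫ : ℝ) = ⟪ξ, x⟫ - t * ⟪ξ, v⟫ := by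
        rw [inner_sub_right, real_inner_smul_right]
      rw [e1, e2]
      have efac : Complex.exp (Complex.I * ((⟪ξ, x⟫ + t * ⟪ξ, v⟫ : ℝ) : ℂ)) * h ξ
            + Complex.exp (Complex.I * ((⟪ξ, x⟫ - t * ⟪ξ, v⟫ : ℝ) : ℂ)) * h ξ
            - 2 * (Complex.exp (Complex.I * ((⟪ξ, x⟫ : ℝ) : ℂ)) * h ξ)
          = (Complex.exp (Complex.I * (((⟪ξ, x⟫ : ℝ) : ℂ) + ((t * ⟪ξ, v⟫ : ℝ) : ℂ)))
            + Complex.exp (Complex.I * (((⟪ξ, x⟫ : ℝ) : ℂ) - ((t * ⟪ξ, v⟫ : ℝ) : ℂ)))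
            - 2 * Complex.exp (Complex.I * ((⟪ξ, x⟫ : ℝ) : ℂ))) * h ξ := by
        push_cast; ring
      rw [efac, norm_mul, hnorm, mul_one]
      have hk := key_exp_bound (⟪ξ, x⟫) (t * ⟪ξ, v⟫)
      refine hk.trans ?_
      have hcs := abs_real_inner_le_norm ξ v
      have h1 : ⟪ξ, v⟫ ^ 2 ≤ (‖ξ‖ * ‖v‖) ^ 2 := by
        rw [← sq_abs (⟪ξ, v⟫)]
        exact pow_le_pow_left₀ (abs_nonneg _) hcs 2
      nlinarith [sq_nonneg t, sq_nonneg ‖ξ‖, sq_nonneg ‖v‖]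
    refine le_trans (mul_le_mul_of_nonneg_left hle hc0) (le_of_eq ?_)
    rw [integral_const_mul]
  -- pointwise kink condition
  have hK : ∀ x v : EuclideanSpace ℝ (Fin d),
      ∑ i, (if ⟪ω i, x⟫ = b i then a i * |⟪ω i, v⟫| else 0) = 0 := by
    intro x v
    set S : ℝ := ∑ i, (if ⟪ω i, x⟫ = b i then a i * |⟪ω i, v⟫| else 0) with hS
    have hev1 : ∀ᶠ t in nhdsWithin (0 : ℝ) (Set.Ioi 0),
        ∀ i : Fin n, ⟪ω i, x⟫ - b i ≠ 0 → t * |⟪ω i, v⟫| < |⟪ω i, x⟫ - b i| := by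
      rw [Filter.eventually_all]
      intro i
      by_cases hsi : ⟪ω i, x⟫ - b i = 0
      · filter_upwards with t ht
        exact absurd hsi ht
      · have habs : (0 : ℝ) < |⟪ω i, x⟫ - b i| := abs_pos.2 hsi
        have htend : Filter.Tendsto (fun t : ℝ => t * |⟪ω i, v⟫|)
            (nhdsWithin 0 (Set.Ioi 0)) (nhds 0) := by
          have h0 : Filter.Tendsto (fun t : ℝ => t * |⟪ω i, v⟫|) (nhds 0)
              (nhds (0 * |⟪ω i, v⟫|)) := (continuous_id.mul continuous_const).tendsto 0
          rw [zero_mul] at h0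
          exact h0.mono_left nhdsWithin_le_nhds
        filter_upwards [htend.eventually_lt_const habs] with t ht _
        exact ht
    have hev2 : ∀ᶠ t in nhdsWithin (0 : ℝ) (Set.Ioi 0),
        |S| ≤ ((n : ℝ) * (c * (‖v‖ ^ 2 * B))) * t := by
      filter_upwards [hev1, self_mem_nhdsWithin] with t hsm ht
      have ht0 : (0 : ℝ) < t := ht
      have hq := hQsum x (t • v)
      have hb := hbound x v t
      have hsum : ∑ i, a i * max (|⟪ω i, t • v⟫| - |⟪ω i, x⟫ - b i|) 0 = t * S := by
        rw [hS, Finset.mul_sum]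
        apply Finset.sum_congr rfl
        intro i _
        rw [real_inner_smul_right, abs_mul, abs_of_pos ht0]
        by_cases hsi : ⟪ω i, x⟫ - b i = 0
        · rw [if_pos (sub_eq_zero.mp hsi), hsi, abs_zero, sub_zero,
            max_eq_left (by positivity)]
          ring
        · rw [if_neg (fun hh => hsi (sub_eq_zero.mpr hh)),
            max_eq_right (by linarith [hsm i hsi])]
          ring
      rw [hsum] at hq
      rw [hq] at hb
      have habs2 : |(1 / n : ℝ) * (t * S)| = (1 / n : ℝ) * (t * |S|) := by
        rw [abs_mul, abs_mul, abs_of_pos (by positivity : (0 : ℝ) < (1 / n : ℝ)),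
          abs_of_pos ht0]
      rw [habs2] at hb
      have h2 : t * |S| ≤ (n : ℝ) * (c * (‖v‖ ^ 2 * t ^ 2 * B)) := by
        have h3 := mul_le_mul_of_nonneg_left hb (le_of_lt hn0)
        calc t * |S| = (n : ℝ) * ((1 / n : ℝ) * (t * |S|)) := by field_simp
          _ ≤ (n : ℝ) * (c * (‖v‖ ^ 2 * t ^ 2 * B)) := h3
      rw [show (n : ℝ) * (c * (‖v‖ ^ 2 * t ^ 2 * B))
        = t * (((n : ℝ) * (c * (‖v‖ ^ 2 * B))) * t) from by ring] at h2
      exact (mul_le_mul_iff_right₀ ht0).mp h2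
    have htend0 : Filter.Tendsto (fun t : ℝ => ((n : ℝ) * (c * (‖v‖ ^ 2 * B))) * t)
        (nhdsWithin 0 (Set.Ioi 0)) (nhds 0) := by
      have h0 : Filter.Tendsto (fun t : ℝ => ((n : ℝ) * (c * (‖v‖ ^ 2 * B))) * t) (nhds 0)
          (nhds (((n : ℝ) * (c * (‖v‖ ^ 2 * B))) * 0)) :=
        (continuous_const.mul continuous_id).tendsto 0
      rw [mul_zero] at h0
      exact h0.mono_left nhdsWithin_le_nhds
    have hS0 : |S| ≤ 0 := ge_of_tendsto htend0 hev2
    exact abs_eq_zero.mp (le_antisymm hS0 (abs_nonneg S))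
  -- global second differences vanish (Jensen identity)
  have hJ : ∀ p v : EuclideanSpace ℝ (Fin d), f (p + v) + f (p - v) = 2 * f p := by
    intro p v
    have hq := hQsum p v
    have hz : ∑ i, a i * max (|⟪ω i, v⟫| - |⟪ω i, p⟫ - b i|) 0 = 0 := by
      have hterm : ∀ i : Fin n, a i * max (|⟪ω i, v⟫| - |⟪ω i, p⟫ - b i|) 0
          = (a i * |⟪ω i, v⟫|) * max (1 - |(⟪ω i, p⟫ - b i) / ⟪ω i, v⟫|) 0 := by
        intro i
        by_cases hu : ⟪ω i, v⟫ = 0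
        · rw [hu, abs_zero,
            max_eq_right (by simp [abs_nonneg] : (0 : ℝ) - |⟪ω i, p⟫ - b i| ≤ 0)]
          ring
        · have hTe : |⟪ω i, p⟫ - b i| = |⟪ω i, v⟫| * |(⟪ω i, p⟫ - b i) / ⟪ω i, v⟫| := by
            rw [← abs_mul]
            congr 1
            rw [mul_comm, div_mul_cancel₀ _ hu]
          rw [hTe, show |⟪ω i, v⟫| - |⟪ω i, v⟫| * |(⟪ω i, p⟫ - b i) / ⟪ω i, v⟫|
              = |⟪ω i, v⟫| * (1 - |(⟪ω i, p⟫ - b i) / ⟪ω i, v⟫|) from by ring,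
            mul_factor_max _ _ _ (abs_nonneg (⟪ω i, v⟫ : ℝ))]
      rw [Finset.sum_congr rfl (fun i _ => hterm i)]
      rw [← Finset.sum_fiberwise_of_maps_to
        (g := fun i => (⟪ω i, p⟫ - b i) / ⟪ω i, v⟫)
        (t := Finset.univ.image (fun i => (⟪ω i, p⟫ - b i) / ⟪ω i, v⟫))
        (fun i _ => Finset.mem_image_of_mem _ (Finset.mem_univ i))]
      apply Finset.sum_eq_zero
      intro τ _
      have hfib : ∑ i ∈ Finset.univ.filter (fun i => (⟪ω i, p⟫ - b i) / ⟪ω i, v⟫ = τ),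
          a i * |⟪ω i, v⟫| = 0 := by
        rw [Finset.sum_filter]
        refine Eq.trans ?_ (hK (p - τ • v) v)
        apply Finset.sum_congr rfl
        intro i _
        by_cases hu : ⟪ω i, v⟫ = 0
        · rw [hu, abs_zero, mul_zero, ite_self, ite_self]
        · have hiff : ((⟪ω i, p⟫ - b i) / ⟪ω i, v⟫ = τ) ↔ (⟪ω i, p - τ • v⟫ = b i) := by
            rw [inner_sub_right, real_inner_smul_right, div_eq_iff hu]
            constructor
            · intro hh; linarith
            · intro hh; linarith
          rw [if_congr hiff rfl rfl]
      calc ∑ i ∈ Finset.univ.filter (fun i => (⟪ω i, p⟫ - b i) / ⟪ω i, v⟫ = τ),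
            (a i * |⟪ω i, v⟫|) * max (1 - |(⟪ω i, p⟫ - b i) / ⟪ω i, v⟫|) 0
          = ∑ i ∈ Finset.univ.filter (fun i => (⟪ω i, p⟫ - b i) / ⟪ω i, v⟫ = τ),
            (a i * |⟪ω i, v⟫|) * max (1 - |τ|) 0 :=
            Finset.sum_congr rfl (fun i hi => by rw [(Finset.mem_filter.mp hi).2])
        _ = (∑ i ∈ Finset.univ.filter (fun i => (⟪ω i, p⟫ - b i) / ⟪ω i, v⟫ = τ),
            a i * |⟪ω i, v⟫|) * max (1 - |τ|) 0 := (Finset.sum_mul _ _ _).symm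
        _ = 0 := by rw [hfib, zero_mul]
    rw [hz, mul_zero] at hq
    linarith
  -- f is affine: contradiction
  have hfc : Continuous f := by
    have hfe : f = fun x => (1 / n : ℝ) * ∑ i, a i * max (⟪ω i, x⟫ - b i) 0 := funext hf
    rw [hfe]
    exact continuous_const.mul (continuous_finset_sum _ (fun i _ =>
      continuous_const.mul
        (((continuous_const.inner continuous_id).sub continuous_const).max continuous_const)))
  have hadd : ∀ x y : EuclideanSpace ℝ (Fin d),
      f (x + y) - f 0 = (f x - f 0) + (f y - f 0) := by
    intro x y
    have h1 := hJ ((2⁻¹ : ℝ) • (x + y)) ((2⁻¹ : ℝ) • (x + y))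
    have h2 := hJ ((2⁻¹ : ℝ) • (x + y)) (x - (2⁻¹ : ℝ) • (x + y))
    have e1 : (2⁻¹ : ℝ) • (x + y) + (2⁻¹ : ℝ) • (x + y) = x + y := by module
    have e2 : (2⁻¹ : ℝ) • (x + y) - (2⁻¹ : ℝ) • (x + y) = (0 : EuclideanSpace ℝ (Fin d)) :=
      sub_self _
    have e3 : (2⁻¹ : ℝ) • (x + y) + (x - (2⁻¹ : ℝ) • (x + y)) = x := by module
    have e4 : (2⁻¹ : ℝ) • (x + y) - (x - (2⁻¹ : ℝ) • (x + y)) = y := by module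
    rw [e1, e2] at h1
    rw [e3, e4] at h2
    linarith
  set L : EuclideanSpace ℝ (Fin d) →+ ℝ :=
    AddMonoidHom.mk' (fun x => f x - f 0) (fun x y => hadd x y) with hLdef
  have hLc : Continuous L := hfc.sub continuous_const
  set Llin := L.toRealLinearMap hLc with hLl
  apply hnotaff
  refine ⟨(InnerProductSpace.toDual ℝ (EuclideanSpace ℝ (Fin d))).symm Llin, f 0, fun x => ?_⟩
  have h1 : ⟪(InnerProductSpace.toDual ℝ (EuclideanSpace ℝ (Fin d))).symm Llin, x⟫
      = Llin x := InnerProductSpace.toDual_symm_apply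
  have h2 : Llin x = f x - f 0 := by
    rw [hLl]
    rw [show ((L.toRealLinearMap hLc) x : ℝ) = L x from congrFun (AddMonoidHom.coe_toRealLinearMap L hLc) x]
    rfl
  rw [h1, h2]
  ring
end

section
/- Let S¹ denote the unit circle in ℝ², equipped with its surface (arclength) measure σ, and write ω = (ω₀, ω₁) for points of S¹. Then for every x ∈ ℝ² with ‖x‖₂ < 1: ∫_{S¹} ∫_{−1}^{1} (⟨ω, x⟩ − b)_+ · (8ω₀⁴ − 8ω₀² + 1) db dσ(ω) = 0. That is, the even density (ω, b) ↦ 8ω₀⁴ − 8ω₀² + 1 on S¹ × (−1, 1) yields an infinite-width ReLU network representation of the zero function on the open unit ball of ℝ². -/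
open MeasureTheory Metric Real Set
open scoped NNReal ENNReal
open scoped RealInnerProductSpace

noncomputable section

def vec2 (a b : ℝ) : EuclideanSpace ℝ (Fin 2) := (WithLp.equiv 2 (Fin 2 → ℝ)).symm ![a, b]

@[simp] lemma vec2_zero (a b : ℝ) : vec2 a b 0 = a := rfl
@[simp] lemma vec2_one (a b : ℝ) : vec2 a b 1 = b := rfl

lemma vec2_eta (v : EuclideanSpace ℝ (Fin 2)) : vec2 (v 0) (v 1) = v := by
  ext i
  fin_cases i <;> rfl

lemma sq_add_sq_of_norm (v : EuclideanSpace ℝ (Fin 2)) (hv : ‖v‖ = 1) :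
    v 0 ^ 2 + v 1 ^ 2 = 1 := by
  have h := EuclideanSpace.norm_eq v
  rw [hv] at h
  have h2 : (∑ i : Fin 2, ‖v i‖ ^ 2) = 1 := Real.sqrt_eq_one.mp h.symm
  simpa [Fin.sum_univ_two, Real.norm_eq_abs, sq_abs] using h2

lemma norm_vec2 {a b : ℝ} (h : a ^ 2 + b ^ 2 = 1) : ‖vec2 a b‖ = 1 := by
  rw [EuclideanSpace.norm_eq]
  simp only [Fin.sum_univ_two, vec2_zero, vec2_one, Real.norm_eq_abs, sq_abs]
  rw [h, Real.sqrt_one]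

lemma vec2_mem {a b : ℝ} (h : a ^ 2 + b ^ 2 = 1) :
    vec2 a b ∈ Metric.sphere (0 : EuclideanSpace ℝ (Fin 2)) 1 := by
  rw [mem_sphere_zero_iff_norm]
  exact norm_vec2 h

lemma inner_vec2 (a b : ℝ) (x : EuclideanSpace ℝ (Fin 2)) :
    ⟪vec2 a b, x⟫ = a * x 0 + b * x 1 := by
  simp [PiLp.inner_apply, Fin.sum_univ_two, RCLike.inner_apply]
  ring

def rotS (c s : ℝ) (h : c ^ 2 + s ^ 2 = 1) :
    Metric.sphere (0 : EuclideanSpace ℝ (Fin 2)) 1 ≃ᵢ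
      Metric.sphere (0 : EuclideanSpace ℝ (Fin 2)) 1 where
  toFun ω := ⟨vec2 (c * (ω : EuclideanSpace ℝ (Fin 2)) 0 - s * (ω : EuclideanSpace ℝ (Fin 2)) 1)
      (s * (ω : EuclideanSpace ℝ (Fin 2)) 0 + c * (ω : EuclideanSpace ℝ (Fin 2)) 1), by
    apply vec2_mem
    have h2 := sq_add_sq_of_norm _ (mem_sphere_zero_iff_norm.mp ω.2)
    set a := (ω : EuclideanSpace ℝ (Fin 2)) 0
    set b := (ω : EuclideanSpace ℝ (Fin 2)) 1
    linear_combination (a ^ 2 + b ^ 2) * h + h2⟩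
  invFun ω := ⟨vec2 (c * (ω : EuclideanSpace ℝ (Fin 2)) 0 + s * (ω : EuclideanSpace ℝ (Fin 2)) 1)
      (-s * (ω : EuclideanSpace ℝ (Fin 2)) 0 + c * (ω : EuclideanSpace ℝ (Fin 2)) 1), by
    apply vec2_mem
    have h2 := sq_add_sq_of_norm _ (mem_sphere_zero_iff_norm.mp ω.2)
    set a := (ω : EuclideanSpace ℝ (Fin 2)) 0
    set b := (ω : EuclideanSpace ℝ (Fin 2)) 1
    linear_combination (a ^ 2 + b ^ 2) * h + h2⟩
  left_inv ω := by
    apply Subtype.ext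
    show vec2 _ _ = _
    simp only [vec2_zero, vec2_one]
    ext i
    set a := (ω : EuclideanSpace ℝ (Fin 2)) 0 with ha
    set b := (ω : EuclideanSpace ℝ (Fin 2)) 1 with hb
    fin_cases i
    · show c * (c * a - s * b) + s * (s * a + c * b) = a
      linear_combination a * h
    · show -s * (c * a - s * b) + c * (s * a + c * b) = b
      linear_combination b * h
  right_inv ω := by
    apply Subtype.ext
    show vec2 _ _ = _
    simp only [vec2_zero, vec2_one]
    ext i
    set a := (ω : EuclideanSpace ℝ (Fin 2)) 0 with ha
    set b := (ω : EuclideanSpace ℝ (Fin 2)) 1 with hb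
    fin_cases i
    · show c * (c * a + s * b) - s * (-s * a + c * b) = a
      linear_combination a * h
    · show s * (c * a + s * b) + c * (-s * a + c * b) = b
      linear_combination b * h
  isometry_toFun := Isometry.of_dist_eq fun ω₁ ω₂ => by
    rw [Subtype.dist_eq, Subtype.dist_eq, EuclideanSpace.dist_eq, EuclideanSpace.dist_eq]
    simp only [vec2_zero, vec2_one, Fin.sum_univ_two, Real.dist_eq, sq_abs]
    congr 1
    set a1 := (ω₁ : EuclideanSpace ℝ (Fin 2)) 0
    set b1 := (ω₁ : EuclideanSpace ℝ (Fin 2)) 1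
    set a2 := (ω₂ : EuclideanSpace ℝ (Fin 2)) 0
    set b2 := (ω₂ : EuclideanSpace ℝ (Fin 2)) 1
    linear_combination ((a1 - a2) ^ 2 + (b1 - b2) ^ 2) * h

end

/-- The arclength (1-dimensional Hausdorff) measure on the unit circle `S¹ ⊆ ℝ²`. -/
noncomputable def circleMeasure :
    Measure (Metric.sphere (0 : EuclideanSpace ℝ (Fin 2)) 1) :=
  μH[1]

noncomputable section

lemma integral_rot (c s : ℝ) (h : c ^ 2 + s ^ 2 = 1)
    (f : Metric.sphere (0 : EuclideanSpace ℝ (Fin 2)) 1 → ℝ) :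
    ∫ ω, f (rotS c s h ω) ∂circleMeasure = ∫ ω, f ω ∂circleMeasure :=
  ((rotS c s h).measurePreserving_hausdorffMeasure 1).integral_comp
    (rotS c s h).toHomeomorph.toMeasurableEquiv.measurableEmbedding f

def circleParam (θ : ℝ) : Metric.sphere (0 : EuclideanSpace ℝ (Fin 2)) 1 :=
  ⟨vec2 (Real.cos θ) (Real.sin θ), vec2_mem (by
    rw [← Real.sin_sq_add_cos_sq θ]; ring)⟩

lemma lipschitz_circleParam : LipschitzWith 1 circleParam := by
  apply LipschitzWith.of_dist_le_mul
  intro u v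
  rw [NNReal.coe_one, one_mul, Subtype.dist_eq, EuclideanSpace.dist_eq, Real.dist_eq]
  simp only [circleParam, vec2_zero, vec2_one, Fin.sum_univ_two, Real.dist_eq, sq_abs]
  have key : (Real.cos u - Real.cos v) ^ 2 + (Real.sin u - Real.sin v) ^ 2 ≤ (u - v) ^ 2 := by
    have h1 : 1 - (u - v) ^ 2 / 2 ≤ Real.cos (u - v) := Real.one_sub_sq_div_two_le_cos
    have h2 : Real.cos (u - v) = Real.cos u * Real.cos v + Real.sin u * Real.sin v :=
      Real.cos_sub u v
    nlinarith [Real.sin_sq_add_cos_sq u, Real.sin_sq_add_cos_sq v]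
  calc Real.sqrt ((Real.cos u - Real.cos v) ^ 2 + (Real.sin u - Real.sin v) ^ 2)
      ≤ Real.sqrt ((u - v) ^ 2) := Real.sqrt_le_sqrt key
    _ = |u - v| := Real.sqrt_sq_eq_abs _

lemma circleParam_surj_Icc :
    (Set.univ : Set (Metric.sphere (0 : EuclideanSpace ℝ (Fin 2)) 1)) ⊆
      circleParam '' Set.Icc (-π) π := by
  rintro ⟨v, hv⟩ -
  have hn : ‖v‖ = 1 := mem_sphere_zero_iff_norm.mp hv
  have h2 := sq_add_sq_of_norm v hn
  set z : ℂ := ⟨v 0, v 1⟩ with hz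
  have habs : ‖z‖ = 1 := by
    rw [Complex.norm_def, Complex.normSq_mk]
    rw [show v 0 * v 0 + v 1 * v 1 = 1 by linear_combination h2]
    exact Real.sqrt_one
  have hz0 : z ≠ 0 := by
    intro h0
    rw [h0] at habs
    simp at habs
  refine ⟨Complex.arg z, ?_, ?_⟩
  · exact ⟨(Complex.arg_mem_Ioc z).1.le, Complex.arg_le_pi z⟩
  · apply Subtype.ext
    show vec2 _ _ = v
    rw [Complex.cos_arg hz0, Complex.sin_arg, habs]
    simp only [hz]
    rw [div_one, div_one]
    exact vec2_eta v

instance : IsFiniteMeasure circleMeasure := by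
  constructor
  show μH[1] Set.univ < ⊤
  calc μH[1] (Set.univ : Set (Metric.sphere (0 : EuclideanSpace ℝ (Fin 2)) 1))
      ≤ μH[1] (circleParam '' Set.Icc (-π) π) := measure_mono circleParam_surj_Icc
    _ ≤ (1 : ℝ≥0) ^ (1 : ℝ) * μH[1] (Set.Icc (-π) π) :=
        lipschitz_circleParam.hausdorffMeasure_image_le zero_le_one _
    _ = volume (Set.Icc (-π) π) := by
        rw [MeasureTheory.hausdorffMeasure_real]
        simp
    _ < ⊤ := by
        rw [Real.volume_Icc]
        exact ENNReal.ofReal_lt_top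

lemma inner_int {t : ℝ} (h1 : -1 ≤ t) (h2 : t ≤ 1) :
    ∫ b in (-1 : ℝ)..1, max (t - b) 0 = (t + 1) ^ 2 / 2 := by
  have hcont : Continuous fun b : ℝ => max (t - b) 0 :=
    (continuous_const.sub continuous_id).max continuous_const
  have hsplit := intervalIntegral.integral_add_adjacent_intervals
    (a := (-1 : ℝ)) (b := t) (c := 1) (μ := volume)
    (hcont.intervalIntegrable _ _) (hcont.intervalIntegrable _ _)
  have hleft : ∫ b in (-1 : ℝ)..t, max (t - b) 0 = (t + 1) ^ 2 / 2 := by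
    have e : ∫ b in (-1 : ℝ)..t, max (t - b) 0 = ∫ b in (-1 : ℝ)..t, (t - b) := by
      apply intervalIntegral.integral_congr
      intro b hb
      rw [Set.uIcc_of_le h1] at hb
      exact max_eq_left (by linarith [hb.2])
    rw [e, intervalIntegral.integral_sub intervalIntegrable_const intervalIntegral.intervalIntegrable_id,
      intervalIntegral.integral_const, integral_id, smul_eq_mul]
    ring
  have hright : ∫ b in t..(1 : ℝ), max (t - b) 0 = 0 := by
    have e : ∫ b in t..(1 : ℝ), max (t - b) 0 = ∫ b in t..(1 : ℝ), (0 : ℝ) := by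
      apply intervalIntegral.integral_congr
      intro b hb
      rw [Set.uIcc_of_le h2] at hb
      exact max_eq_right (by linarith [hb.1])
    rw [e, intervalIntegral.integral_zero]
  rw [← hsplit, hleft, hright, add_zero]

lemma rotS_coe (c s : ℝ) (h : c ^ 2 + s ^ 2 = 1)
    (ω : Metric.sphere (0 : EuclideanSpace ℝ (Fin 2)) 1) :
    ((rotS c s h ω : EuclideanSpace ℝ (Fin 2))) =
      vec2 (c * (ω : EuclideanSpace ℝ (Fin 2)) 0 - s * (ω : EuclideanSpace ℝ (Fin 2)) 1)
        (s * (ω : EuclideanSpace ℝ (Fin 2)) 0 + c * (ω : EuclideanSpace ℝ (Fin 2)) 1) := rfl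

lemma integrable_of_continuous
    (f : Metric.sphere (0 : EuclideanSpace ℝ (Fin 2)) 1 → ℝ) (hf : Continuous f) :
    Integrable f circleMeasure :=
  hf.integrable_of_hasCompactSupport
    (IsCompact.of_isClosed_subset isCompact_univ (isClosed_tsupport f) (Set.subset_univ _))

end

theorem stmt10 (x : EuclideanSpace ℝ (Fin 2)) (hx : ‖x‖ < 1) :
    (∫ ω, (∫ b in (-1 : ℝ)..1,
        max (⟪(ω : EuclideanSpace ℝ (Fin 2)), x⟫ - b) 0 *
          (8 * ((ω : EuclideanSpace ℝ (Fin 2)) 0) ^ 4 -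
            8 * ((ω : EuclideanSpace ℝ (Fin 2)) 0) ^ 2 + 1))
      ∂circleMeasure) = 0 := by
  set g : Metric.sphere (0 : EuclideanSpace ℝ (Fin 2)) 1 → ℝ := fun ω =>
    (⟪(ω : EuclideanSpace ℝ (Fin 2)), x⟫ + 1) ^ 2 / 2 *
      (8 * ((ω : EuclideanSpace ℝ (Fin 2)) 0) ^ 4 -
        8 * ((ω : EuclideanSpace ℝ (Fin 2)) 0) ^ 2 + 1) with hgdef
  have h1 : ∀ ω : Metric.sphere (0 : EuclideanSpace ℝ (Fin 2)) 1,
      (∫ b in (-1 : ℝ)..1,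
        max (⟪(ω : EuclideanSpace ℝ (Fin 2)), x⟫ - b) 0 *
          (8 * ((ω : EuclideanSpace ℝ (Fin 2)) 0) ^ 4 -
            8 * ((ω : EuclideanSpace ℝ (Fin 2)) 0) ^ 2 + 1)) = g ω := by
    intro ω
    have hb : |⟪(ω : EuclideanSpace ℝ (Fin 2)), x⟫| ≤ ‖x‖ := by
      have h := abs_real_inner_le_norm (ω : EuclideanSpace ℝ (Fin 2)) x
      rwa [mem_sphere_zero_iff_norm.mp ω.2, one_mul] at h
    have hb' := abs_le.mp (hb.trans hx.le)
    rw [intervalIntegral.integral_mul_const, inner_int hb'.1 hb'.2, hgdef]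
  rw [MeasureTheory.integral_congr_ae (Filter.Eventually.of_forall h1)]
  -- continuity of g
  have hc0 : Continuous fun ω : Metric.sphere (0 : EuclideanSpace ℝ (Fin 2)) 1 =>
      (ω : EuclideanSpace ℝ (Fin 2)) := continuous_subtype_val
  have hci : Continuous fun ω : Metric.sphere (0 : EuclideanSpace ℝ (Fin 2)) 1 =>
      ⟪(ω : EuclideanSpace ℝ (Fin 2)), x⟫ := hc0.inner continuous_const
  have hce : Continuous fun ω : Metric.sphere (0 : EuclideanSpace ℝ (Fin 2)) 1 =>
      (ω : EuclideanSpace ℝ (Fin 2)) 0 :=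
    (EuclideanSpace.proj (0 : Fin 2) : EuclideanSpace ℝ (Fin 2) →L[ℝ] ℝ).continuous.comp hc0
  have hgc : Continuous g := by
    rw [hgdef]
    exact (((hci.add continuous_const).pow 2).div_const 2).mul
      (((continuous_const.mul (hce.pow 4)).sub (continuous_const.mul (hce.pow 2))).add
        continuous_const)
  -- rotation parameters
  set s : ℝ := Real.sqrt 2 / 2 with hsdef
  have hs2 : s ^ 2 = 1 / 2 := by
    rw [hsdef, div_pow, Real.sq_sqrt (by norm_num : (0:ℝ) ≤ 2)]
    norm_num
  have hA : (1 : ℝ) ^ 2 + (0 : ℝ) ^ 2 = 1 := by norm_num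
  have hB : s ^ 2 + s ^ 2 = 1 := by linear_combination 2 * hs2
  have hC : (0 : ℝ) ^ 2 + (1 : ℝ) ^ 2 = 1 := by norm_num
  have hD : (-s) ^ 2 + s ^ 2 = 1 := by linear_combination 2 * hs2
  have hE : (-1 : ℝ) ^ 2 + (0 : ℝ) ^ 2 = 1 := by norm_num
  have hF : (-s) ^ 2 + (-s) ^ 2 = 1 := by linear_combination 2 * hs2
  have hG : (0 : ℝ) ^ 2 + (-1 : ℝ) ^ 2 = 1 := by norm_num
  have hH : s ^ 2 + (-s) ^ 2 = 1 := by linear_combination 2 * hs2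
  have key : ∀ ω : Metric.sphere (0 : EuclideanSpace ℝ (Fin 2)) 1,
      g (rotS 1 0 hA ω) + g (rotS s s hB ω) + g (rotS 0 1 hC ω) + g (rotS (-s) s hD ω) +
        g (rotS (-1) 0 hE ω) + g (rotS (-s) (-s) hF ω) + g (rotS 0 (-1) hG ω) +
        g (rotS s (-s) hH ω) = 0 := by
    intro ω
    have hab : ((ω : EuclideanSpace ℝ (Fin 2)) 0) ^ 2 +
        ((ω : EuclideanSpace ℝ (Fin 2)) 1) ^ 2 = 1 :=
      sq_add_sq_of_norm _ (mem_sphere_zero_iff_norm.mp ω.2)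
    simp only [hgdef, rotS_coe, vec2_zero, vec2_one, inner_vec2]
    set a := (ω : EuclideanSpace ℝ (Fin 2)) 0
    set b := (ω : EuclideanSpace ℝ (Fin 2)) 1
    set x0 := x 0
    set x1 := x 1
    linear_combination ((16 : ℝ) * a^4 * s^6 * x0^2 + (16 : ℝ) * a^4 * s^6 * x1^2 + (8 : ℝ) * a^4 * x0^2 + (-128 : ℝ) * a^3 * b * s^6 * x0 * x1 + (16 : ℝ) * a^3 * b * x0 * x1 + (224 : ℝ) * a^2 * b^2 * s^6 * x0^2 + (-32 : ℝ) * a^2 * b^2 * s^6 * x1^2 + (-8 : ℝ) * a^2 * b^2 * x0^2 + (8 : ℝ) * a^2 * b^2 * x1^2 + (16 : ℝ) * a^2 * s^6 * x0^2 + (16 : ℝ) * a^2 * s^6 * x1^2 + (-16 : ℝ) * a^2 * s^4 * x0^2 + (-16 : ℝ) * a^2 * s^4 * x1^2 + (16 : ℝ) * a^2 * s^4 + (8 : ℝ) * a^2 + (128 : ℝ) * a * b^3 * s^6 * x0 * x1 + (-16 : ℝ) * a * b^3 * x0 * x1 + (-128 : ℝ) * a * b * s^6 * x0 * x1 + (64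 : ℝ) * a * b * s^4 * x0 * x1 + (16 : ℝ) * b^4 * s^6 * x0^2 + (16 : ℝ) * b^4 * s^6 * x1^2 + (8 : ℝ) * b^4 * x0^2 + (208 : ℝ) * b^2 * s^6 * x0^2 + (-48 : ℝ) * b^2 * s^6 * x1^2 + (-80 : ℝ) * b^2 * s^4 * x0^2 + (48 : ℝ) * b^2 * s^4 * x1^2 + (80 : ℝ) * b^2 * s^4 + (-8 : ℝ) * b^2 * x0^2 + (-8 : ℝ) * b^2 * x1^2 + (-8 : ℝ) * b^2 + (16 : ℝ) * s^6 * x0^2 + (16 : ℝ) * s^6 * x1^2 + (-16 : ℝ) * s^4 * x0^2 + (-16 : ℝ) * s^4 * x1^2 + (16 : ℝ) * s^4 + (2 : ℝ) * s^2 * x0^2 + (2 : ℝ) * s^2 * x1^2 + (-16 : ℝ) * s^2 + (1 : ℝ) * x0^2 + (1 : ℝ) * x1^2) * hab + ((256 : ℝ) * a * b^3 * s^4 * x0 * x1 + (-128 : ℝ) * a * b * s^4 * x0 * x1 + (-192 : ℝ) * b^4 * s^4 * x0^2 + (64 : ℝ) * b^4 * s^4 * x1^2 + (-32 : ℝ)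 * b^4 * s^2 * x0^2 + (-32 : ℝ) * b^4 * s^2 * x1^2 + (-64 : ℝ) * b^4 * s^2 + (-16 : ℝ) * b^4 * x0^2 + (-16 : ℝ) * b^4 * x1^2 + (-32 : ℝ) * b^4 + (192 : ℝ) * b^2 * s^4 * x0^2 + (-64 : ℝ) * b^2 * s^4 * x1^2 + (32 : ℝ) * b^2 * s^2 * x0^2 + (32 : ℝ) * b^2 * s^2 * x1^2 + (64 : ℝ) * b^2 * s^2 + (16 : ℝ) * b^2 * x0^2 + (16 : ℝ) * b^2 * x1^2 + (32 : ℝ) * b^2 + (16 : ℝ) * s^4 * x0^2 + (16 : ℝ) * s^4 * x1^2 + (-8 : ℝ) * s^2 * x0^2 + (-8 : ℝ) * s^2 * x1^2 + (16 : ℝ) * s^2 + (-2 : ℝ) * x0^2 + (-2 : ℝ) * x1^2 + (-8 : ℝ)) * hs2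
  have i1 : Integrable (fun ω => g (rotS 1 0 hA ω)) circleMeasure :=
    integrable_of_continuous _ (hgc.comp (rotS 1 0 hA).continuous)
  have i2 : Integrable (fun ω => g (rotS s s hB ω)) circleMeasure :=
    integrable_of_continuous _ (hgc.comp (rotS s s hB).continuous)
  have i3 : Integrable (fun ω => g (rotS 0 1 hC ω)) circleMeasure :=
    integrable_of_continuous _ (hgc.comp (rotS 0 1 hC).continuous)
  have i4 : Integrable (fun ω => g (rotS (-s) s hD ω)) circleMeasure :=
    integrable_of_continuous _ (hgc.comp (rotS (-s) s hD).continuous)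
  have i5 : Integrable (fun ω => g (rotS (-1) 0 hE ω)) circleMeasure :=
    integrable_of_continuous _ (hgc.comp (rotS (-1) 0 hE).continuous)
  have i6 : Integrable (fun ω => g (rotS (-s) (-s) hF ω)) circleMeasure :=
    integrable_of_continuous _ (hgc.comp (rotS (-s) (-s) hF).continuous)
  have i7 : Integrable (fun ω => g (rotS 0 (-1) hG ω)) circleMeasure :=
    integrable_of_continuous _ (hgc.comp (rotS 0 (-1) hG).continuous)
  have i8 : Integrable (fun ω => g (rotS s (-s) hH ω)) circleMeasure :=
    integrable_of_continuous _ (hgc.comp (rotS s (-s) hH).continuous)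
  have hz : ∫ ω, (g (rotS 1 0 hA ω) + g (rotS s s hB ω) + g (rotS 0 1 hC ω) +
      g (rotS (-s) s hD ω) + g (rotS (-1) 0 hE ω) + g (rotS (-s) (-s) hF ω) +
      g (rotS 0 (-1) hG ω) + g (rotS s (-s) hH ω)) ∂circleMeasure = 0 := by
    simp only [key]
    exact integral_zero _ _
  have j2 : Integrable (fun ω => g (rotS 1 0 hA ω) + g (rotS s s hB ω)) circleMeasure :=
    i1.add i2
  have j3 : Integrable (fun ω => g (rotS 1 0 hA ω) + g (rotS s s hB ω) + g (rotS 0 1 hC ω))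
      circleMeasure := j2.add i3
  have j4 : Integrable (fun ω => g (rotS 1 0 hA ω) + g (rotS s s hB ω) + g (rotS 0 1 hC ω) +
      g (rotS (-s) s hD ω)) circleMeasure := j3.add i4
  have j5 : Integrable (fun ω => g (rotS 1 0 hA ω) + g (rotS s s hB ω) + g (rotS 0 1 hC ω) +
      g (rotS (-s) s hD ω) + g (rotS (-1) 0 hE ω)) circleMeasure := j4.add i5
  have j6 : Integrable (fun ω => g (rotS 1 0 hA ω) + g (rotS s s hB ω) + g (rotS 0 1 hC ω) +
      g (rotS (-s) s hD ω) + g (rotS (-1) 0 hE ω) + g (rotS (-s) (-s) hF ω)) circleMeasure :=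
    j5.add i6
  have j7 : Integrable (fun ω => g (rotS 1 0 hA ω) + g (rotS s s hB ω) + g (rotS 0 1 hC ω) +
      g (rotS (-s) s hD ω) + g (rotS (-1) 0 hE ω) + g (rotS (-s) (-s) hF ω) +
      g (rotS 0 (-1) hG ω)) circleMeasure := j6.add i7
  rw [integral_add j7 i8,
    integral_add j6 i7,
    integral_add j5 i6,
    integral_add j4 i5,
    integral_add j3 i4,
    integral_add j2 i3,
    integral_add i1 i2,
    integral_rot 1 0 hA g, integral_rot s s hB g, integral_rot 0 1 hC g,
    integral_rot (-s) s hD g, integral_rot (-1) 0 hE g, integral_rot (-s) (-s) hF g,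
    integral_rot 0 (-1) hG g, integral_rot s (-s) hH g] at hz
  linarith [hz]
end

section
/- Let d ≥ 2, R > 0, let σ denote the surface measure on the unit sphere S^{d-1} ⊆ ℝ^d, and let λ denote Lebesgue measure on the interval (−R, R). Let α be a finite signed Borel measure on S^{d-1} × (−R, R). Suppose there is a sequence (h_m)_{m≥1} of functions on S^{d-1} × (−R, R), each of which is a finite linear combination of functions of the form (ω, b) ↦ P(ω) · b^{k'} where P : ℝ^d → ℝ is a harmonic homogeneous polynomial of degree k and k, k' are nonnegative integers with k ≡ k' (mod 2) and k' < k − 2, such that for every bounded continuous function ψ : S^{d-1} × (−R, R) → ℝ one has ∫ ψ(ω, b) h_m(ω, b) d(σ ⊗ λ)(ω, b) → ∫ ψ dα as m → ∞. Then for every x in the open ball B_R: ∫_{S^{d-1} × (−R, R)} (⟨ω, x⟩ − b)_+ dα(ω, b) = 0. -/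
open MeasureTheory Filter MvPolynomial Finset Metric
open scoped RealInnerProductSpace Topology ENNReal NNReal
noncomputable section SphAux

/-- 1-D Gaussian moments: `gm n = (n-1)!!` for even `n`, `0` for odd. -/
def gm (n : ℕ) : ℝ := if Even n then ((n-1).doubleFactorial : ℝ) else 0

lemma gm_nonneg (n : ℕ) : 0 ≤ gm n := by
  unfold gm; split <;> positivity

lemma gm_pos (n : ℕ) (hn : Even n) : 0 < gm n := by
  unfold gm; rw [if_pos hn]; exact_mod_cast Nat.doubleFactorial_pos _

lemma gm_succ (m : ℕ) : gm (m + 1) = m * gm (m - 1) := by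
  rcases Nat.even_or_odd m with hm | hm
  · have h1 : ¬ Even (m + 1) := by simp [Nat.even_add_one, hm]
    rcases Nat.eq_zero_or_pos m with rfl | hpos
    · simp [gm]
    · have h2 : ¬ Even (m - 1) := by
        rw [Nat.even_sub hpos]
        simp [hm]
      simp [gm, h1, h2]
  · rcases hm with ⟨t, rfl⟩
    have h1 : Even (2 * t + 1 + 1) := ⟨t+1, by ring⟩
    have h2 : Even (2 * t + 1 - 1) := by simp
    rcases Nat.eq_zero_or_pos t with rfl | ht
    · simp [gm]
    · have e1 : 2 * t + 1 + 1 - 1 = (2 * t - 1) + 2 := by omega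
      have e2 : 2 * t + 1 - 1 - 1 = 2 * t - 1 := by omega
      rw [gm, if_pos h1, gm, if_pos h2, e1, e2, Nat.doubleFactorial_add_two]
      have : ((2 * t - 1) + 2 : ℕ) = (2 * t + 1 : ℕ) := by omega
      rw [this]
      push_cast
      ring

/-- Multi-dimensional Gaussian moments. -/
def Gm {d : ℕ} (a : Fin d → ℕ) : ℝ := ∏ l, gm (a l)

lemma Gm_nonneg {d : ℕ} (a : Fin d → ℕ) : 0 ≤ Gm a :=
  Finset.prod_nonneg fun l _ => gm_nonneg _

lemma Gm_pos {d : ℕ} (a : Fin d → ℕ) (ha : ∀ l, Even (a l)) : 0 < Gm a :=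
  Finset.prod_pos fun l _ => gm_pos _ (ha l)

lemma Gm_eq_zero {d : ℕ} (a : Fin d → ℕ) (i : Fin d) (hi : ¬ Even (a i)) : Gm a = 0 :=
  Finset.prod_eq_zero (Finset.mem_univ i) (by simp [gm, hi])

/-- The Gaussian moment functional on polynomials. -/
def Lm {d : ℕ} (P : MvPolynomial (Fin d) ℝ) : ℝ := (AddMonoidAlgebra.coeff P).sum fun a c => c * Gm (fun l => a l)

lemma Lm_monomial {d : ℕ} (a : Fin d →₀ ℕ) (c : ℝ) : Lm (monomial a c) = c * Gm (fun l => a l) :=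
  MvPolynomial.sum_monomial_eq (by simp only [zero_mul])

lemma Lm_zero {d : ℕ} : Lm (0 : MvPolynomial (Fin d) ℝ) = 0 := by
  simp [Lm]

lemma Lm_add {d : ℕ} (P Q : MvPolynomial (Fin d) ℝ) : Lm (P + Q) = Lm P + Lm Q := by
  unfold Lm; rw [AddMonoidAlgebra.coeff_add]
  exact Finsupp.sum_add_index' (by simp) (by intros; ring)

lemma Lm_smul {d : ℕ} (r : ℝ) (P : MvPolynomial (Fin d) ℝ) : Lm (r • P) = r * Lm P := by
  unfold Lm
  rw [show (AddMonoidAlgebra.coeff (r • P : MvPolynomial (Fin d) ℝ)).sum (fun a c => c * Gm (fun l => a l))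
      = (AddMonoidAlgebra.coeff P).sum fun a c => (r * c) * Gm ⇑a from
    Finsupp.sum_smul_index (by simp)]
  rw [Finsupp.mul_sum]
  congr 1; funext a c; ring

lemma Lm_C_mul {d : ℕ} (r : ℝ) (P : MvPolynomial (Fin d) ℝ) : Lm (C r * P) = r * Lm P := by
  rw [C_mul', Lm_smul]

lemma Lm_sum {d : ℕ} {ι : Type*} (s : Finset ι) (f : ι → MvPolynomial (Fin d) ℝ) :
    Lm (∑ i ∈ s, f i) = ∑ i ∈ s, Lm (f i) := by
  classical
  induction s using Finset.induction_on with
  | empty => simp [Lm_zero]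
  | insert a s hnot ih => rw [Finset.sum_insert hnot, Lm_add, ih, Finset.sum_insert hnot]

lemma Gm_single_add {d : ℕ} (a : Fin d →₀ ℕ) (i : Fin d) :
    Gm (fun l => (Finsupp.single i 1 + a : Fin d →₀ ℕ) l) = (a i : ℝ) * Gm (fun l => (a - Finsupp.single i 1 : Fin d →₀ ℕ) l) := by
  classical
  unfold Gm
  rw [← Finset.mul_prod_erase Finset.univ _ (Finset.mem_univ i),
    ← Finset.mul_prod_erase Finset.univ (fun l => gm ((a - Finsupp.single i 1 : Fin d →₀ ℕ) l))
      (Finset.mem_univ i)]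
  have h1 : ∀ l ∈ Finset.univ.erase i,
      gm ((Finsupp.single i 1 + a : Fin d →₀ ℕ) l) = gm ((a - Finsupp.single i 1 : Fin d →₀ ℕ) l) := by
    intro l hl
    have hli : l ≠ i := (Finset.mem_erase.mp hl).1
    simp [Finsupp.single_apply, Ne.symm hli, hli]
  rw [Finset.prod_congr rfl h1]
  have h2 : (Finsupp.single i 1 + a : Fin d →₀ ℕ) i = a i + 1 := by
    simp [Finsupp.single_apply, add_comm]
  have h3 : (a - Finsupp.single i 1 : Fin d →₀ ℕ) i = a i - 1 := by
    simp [Finsupp.single_apply]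
  simp only [h2, h3]
  rw [gm_succ]
  ring

/-- Stein's identity for the moment functional. -/
lemma Lm_X_mul {d : ℕ} (i : Fin d) (Q : MvPolynomial (Fin d) ℝ) :
    Lm (X i * Q) = Lm (pderiv i Q) := by
  induction Q using MvPolynomial.induction_on' with
  | add p q hp hq => rw [mul_add, Lm_add, map_add, Lm_add, hp, hq]
  | monomial a c =>
    rw [X, monomial_mul, pderiv_monomial, Lm_monomial, Lm_monomial, one_mul, Gm_single_add]
    push_cast
    ring

lemma degree_eq_sum_univ {d : ℕ} (a : Fin d →₀ ℕ) : a.degree = ∑ l, a l := by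
  rw [Finsupp.degree]
  exact Finset.sum_subset (Finset.subset_univ _) (by intro x _ hx; simpa using hx)

/-- Euler's identity on monomials. -/
lemma euler_monomial {d : ℕ} (a : Fin d →₀ ℕ) (c : ℝ) :
    ∑ i, X i * pderiv i (monomial a c) = (∑ l, a l) • monomial a c := by
  classical
  have key : ∀ i : Fin d, X i * pderiv i (monomial a c) = (a i) • monomial a c := by
    intro i
    rw [pderiv_monomial, X, monomial_mul, one_mul]
    rcases Nat.eq_zero_or_pos (a i) with h0 | hpos
    · simp [h0]
    · have : Finsupp.single i 1 + (a - Finsupp.single i 1) = a := by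
        ext l
        rcases eq_or_ne l i with rfl | hne
        · simp [Finsupp.single_apply]; omega
        · simp [Finsupp.single_apply, Ne.symm hne, hne]
      rw [this, smul_monomial]
      congr 1
      push_cast
      ring
  rw [Finset.sum_congr rfl fun i _ => key i, ← Finset.sum_smul]

/-- Euler's identity. -/
lemma euler {d k : ℕ} {P : MvPolynomial (Fin d) ℝ} (hP : P.IsHomogeneous k) :
    ∑ i, X i * pderiv i P = k • P := by
  conv_lhs => rw [← P.support_sum_monomial_coeff]
  conv_rhs => rw [← P.support_sum_monomial_coeff]
  rw [Finset.smul_sum]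
  rw [show ∑ i, X i * pderiv i (∑ v ∈ P.support, monomial v (coeff v P))
      = ∑ v ∈ P.support, ∑ i, X i * pderiv i (monomial v (coeff v P)) by
    rw [Finset.sum_comm]
    refine Finset.sum_congr rfl fun i _ => ?_
    rw [map_sum, Finset.mul_sum]]
  refine Finset.sum_congr rfl fun v hv => ?_
  rw [euler_monomial]
  congr 1
  have hc : coeff v P ≠ 0 := mem_support_iff.mp hv
  have := hP hc
  rw [← degree_eq_sum_univ, Finsupp.degree_eq_weight_one]
  exact this

/-- The moment functional vanishes on harmonic homogeneous polynomials of positive degree. -/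
lemma Lm_harmonic {d k : ℕ} {P : MvPolynomial (Fin d) ℝ} (hP : P.IsHomogeneous k)
    (hharm : (∑ j, pderiv j (pderiv j P)) = 0) (hk : 1 ≤ k) : Lm P = 0 := by
  have h1 : (k : ℝ) * Lm P = Lm ((k : ℕ) • P) := by
    rw [← Nat.cast_smul_eq_nsmul ℝ, Lm_smul]
  have h2 : Lm ((k : ℕ) • P) = 0 := by
    rw [← euler hP, Lm_sum]
    have : ∀ i : Fin d, Lm (X i * pderiv i P) = Lm (pderiv i (pderiv i P)) :=
      fun i => Lm_X_mul i _
    rw [Finset.sum_congr rfl fun i _ => this i, ← Lm_sum, hharm, Lm_zero]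
  have hk' : (k : ℝ) ≠ 0 := by positivity
  have := h1.trans h2
  exact (mul_eq_zero.mp this).resolve_left hk'


lemma pderiv_comm' {d : ℕ} (i j : Fin d) (P : MvPolynomial (Fin d) ℝ) :
    pderiv i (pderiv j P) = pderiv j (pderiv i P) := by
  induction P using MvPolynomial.induction_on' with
  | add p q hp hq => rw [map_add, map_add, hp, hq, map_add, map_add]
  | monomial a c =>
    rcases eq_or_ne i j with rfl | hij
    · rfl
    · rw [pderiv_monomial, pderiv_monomial, pderiv_monomial, pderiv_monomial]
      have e1 : (a - Finsupp.single j 1 : Fin d →₀ ℕ) i = a i := by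
        simp [Finsupp.tsub_apply, Finsupp.single_apply, Ne.symm hij]
      have e2 : (a - Finsupp.single i 1 : Fin d →₀ ℕ) j = a j := by
        simp [Finsupp.tsub_apply, Finsupp.single_apply, hij]
      have e3 : (a - Finsupp.single j 1 - Finsupp.single i 1 : Fin d →₀ ℕ)
          = a - Finsupp.single i 1 - Finsupp.single j 1 := by
        ext l
        simp only [Finsupp.tsub_apply]
        omega
      rw [e1, e2, e3]
      congr 1
      ring

lemma isHomogeneous_pderiv {d k : ℕ} (i : Fin d) {P : MvPolynomial (Fin d) ℝ}
    (hP : P.IsHomogeneous k) : (pderiv i P).IsHomogeneous (k - 1) := by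
  have hrepr : pderiv i P = ∑ a ∈ P.support, pderiv i (monomial a (coeff a P)) := by
    conv_lhs => rw [← P.support_sum_monomial_coeff]
    rw [map_sum]
  rw [hrepr, ← mem_homogeneousSubmodule]
  apply Submodule.sum_mem
  intro a ha
  rw [pderiv_monomial, mem_homogeneousSubmodule]
  rcases Nat.eq_zero_or_pos (a i) with h0 | hpos
  · rw [h0]
    simp only [Nat.cast_zero, mul_zero, map_zero]
    exact isHomogeneous_zero _ _ _
  · apply isHomogeneous_monomial
    have hdeg : a.degree = k := by
      rw [Finsupp.degree_eq_weight_one]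
      exact hP (mem_support_iff.mp ha)
    rw [degree_eq_sum_univ] at hdeg ⊢
    have e0 : ∀ l ∈ Finset.univ.erase i,
        (a - Finsupp.single i 1 : Fin d →₀ ℕ) l = a l := by
      intro l hl
      have hli : l ≠ i := (Finset.mem_erase.mp hl).1
      simp [Finsupp.tsub_apply, Finsupp.single_apply, Ne.symm hli]
    have hsub : (a - Finsupp.single i 1 : Fin d →₀ ℕ) i = a i - 1 := by
      simp [Finsupp.tsub_apply, Finsupp.single_apply]
    have hsplit : a i + (Finset.univ.erase i).sum ⇑a = k := by
      rw [Finset.add_sum_erase _ ⇑a (Finset.mem_univ i)]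
      exact hdeg
    rw [← Finset.add_sum_erase _ (fun l => (a - Finsupp.single i 1 : Fin d →₀ ℕ) l)
        (Finset.mem_univ i), Finset.sum_congr rfl e0, hsub]
    omega

/-- The linear polynomial `⟨·, x⟩`. -/
def linP {d : ℕ} (x : Fin d → ℝ) : MvPolynomial (Fin d) ℝ := ∑ i, C (x i) * X i

/-- Directional derivative of `P` in direction `x`. -/
def DxP {d : ℕ} (x : Fin d → ℝ) (P : MvPolynomial (Fin d) ℝ) : MvPolynomial (Fin d) ℝ :=
  ∑ i, C (x i) * pderiv i P

lemma linP_homog {d : ℕ} (x : Fin d → ℝ) : (linP x).IsHomogeneous 1 := by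
  rw [← mem_homogeneousSubmodule]
  apply Submodule.sum_mem
  intro i _
  rw [C_mul']
  exact Submodule.smul_mem _ _ (by rw [mem_homogeneousSubmodule]; exact isHomogeneous_X ℝ i)

lemma pderiv_linP {d : ℕ} (x : Fin d → ℝ) (i : Fin d) : pderiv i (linP x) = C (x i) := by
  rw [linP, map_sum, Finset.sum_eq_single i]
  · rw [pderiv_C_mul, pderiv_X_self, mul_one]
  · intro l _ hli
    rw [pderiv_C_mul, pderiv_X_of_ne hli, mul_zero]
  · intro hi
    exact absurd (Finset.mem_univ i) hi

lemma DxP_harm {d : ℕ} (x : Fin d → ℝ) {P : MvPolynomial (Fin d) ℝ}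
    (hharm : (∑ l, pderiv l (pderiv l P)) = 0) :
    (∑ l, pderiv l (pderiv l (DxP x P))) = 0 := by
  have e : ∀ l, pderiv l (pderiv l (DxP x P))
      = ∑ i, C (x i) * pderiv i (pderiv l (pderiv l P)) := by
    intro l
    rw [DxP, map_sum, map_sum]
    refine Finset.sum_congr rfl fun i _ => ?_
    rw [pderiv_C_mul, pderiv_C_mul]
    congr 1
    rw [pderiv_comm' l i, pderiv_comm' l i]
  rw [Finset.sum_congr rfl fun l _ => e l, Finset.sum_comm]
  have : ∀ i, ∑ l, C (x i) * pderiv i (pderiv l (pderiv l P)) = 0 := by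
    intro i
    rw [← Finset.mul_sum, ← map_sum, hharm]
    simp
  rw [Finset.sum_congr rfl fun i _ => this i, Finset.sum_const, smul_zero]

lemma DxP_homog {d k : ℕ} (x : Fin d → ℝ) {P : MvPolynomial (Fin d) ℝ}
    (hP : P.IsHomogeneous k) : (DxP x P).IsHomogeneous (k - 1) := by
  rw [← mem_homogeneousSubmodule]
  apply Submodule.sum_mem
  intro i _
  rw [C_mul']
  exact Submodule.smul_mem _ _ (by
    rw [mem_homogeneousSubmodule]; exact isHomogeneous_pderiv i hP)

/-- Main algebraic lemma: the Gaussian moment functional kills `P · ⟨·,x⟩^j` for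
`P` harmonic homogeneous of degree `k > j`. -/
lemma mainAlg {d : ℕ} (x : Fin d → ℝ) :
    ∀ (j k : ℕ) (P : MvPolynomial (Fin d) ℝ), (∑ l, pderiv l (pderiv l P)) = 0 →
      P.IsHomogeneous k → j < k → Lm (P * linP x ^ j) = 0 := by
  intro j
  induction j using Nat.strong_induction_on with
  | _ j IH =>
    intro k P hharm hP hjk
    rcases j with _ | jj
    · rw [pow_zero, mul_one]
      exact Lm_harmonic hP hharm (by omega)
    · have e1 : P * linP x ^ (jj + 1) = ∑ i, C (x i) * (X i * (P * linP x ^ jj)) := by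
        have h : linP x * (P * linP x ^ jj) = ∑ i, C (x i) * (X i * (P * linP x ^ jj)) := by
          rw [linP, Finset.sum_mul]
          exact Finset.sum_congr rfl fun i _ => by ring
        rw [← h]
        ring
      have e3 : ∀ i : Fin d, pderiv i (P * linP x ^ jj)
          = pderiv i P * linP x ^ jj
            + P * ((jj : MvPolynomial (Fin d) ℝ) * linP x ^ (jj - 1) * C (x i)) := by
        intro i
        rw [pderiv_mul, pderiv_pow, pderiv_linP]
      have epoly : ∀ i : Fin d,
          P * ((jj : MvPolynomial (Fin d) ℝ) * linP x ^ (jj - 1) * C (x i))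
          = C ((jj : ℝ)) * (C (x i) * (P * linP x ^ (jj - 1))) := by
        intro i
        rw [← map_natCast (C : ℝ →+* MvPolynomial (Fin d) ℝ) jj]
        ring
      have hterm : ∀ i ∈ Finset.univ, Lm (C (x i) * (X i * (P * linP x ^ jj)))
          = x i * Lm (pderiv i P * linP x ^ jj)
            + (x i * x i) * ((jj : ℝ) * Lm (P * linP x ^ (jj - 1))) := by
        intro i _
        rw [Lm_C_mul, Lm_X_mul, e3 i, Lm_add, epoly i, Lm_C_mul, Lm_C_mul]
        ring
      rw [e1, Lm_sum, Finset.sum_congr rfl hterm, Finset.sum_add_distrib]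
      have hA : ∑ i, x i * Lm (pderiv i P * linP x ^ jj) = 0 := by
        have h1 : ∑ i, x i * Lm (pderiv i P * linP x ^ jj)
            = Lm (DxP x P * linP x ^ jj) := by
          rw [DxP, Finset.sum_mul, Lm_sum]
          refine Finset.sum_congr rfl fun i _ => ?_
          rw [mul_assoc, Lm_C_mul]
        rw [h1]
        exact IH jj (by omega) (k - 1) (DxP x P) (DxP_harm x hharm) (DxP_homog x hP)
          (by omega)
      have hB : ((jj : ℝ) * Lm (P * linP x ^ (jj - 1))) = 0 := by
        rcases jj with _ | t
        · simp
        · simp only [Nat.add_sub_cancel]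
          rw [IH t (by omega) k P hharm hP (by omega)]
          simp
      rw [hA]
      simp [hB]

end SphAux

noncomputable section SphRot

variable {d : ℕ}

/-- Rotation in the `(i,j)` coordinate plane. -/
def rotFun (i j : Fin d) (c s : ℝ) (x : EuclideanSpace ℝ (Fin d)) :
    EuclideanSpace ℝ (Fin d) :=
  WithLp.toLp 2 (fun l => if l = i then c * x i - s * x j else if l = j then s * x i + c * x j else x l)

lemma rotFun_apply_i (i j : Fin d) (c s : ℝ) (x : EuclideanSpace ℝ (Fin d)) :
    rotFun i j c s x i = c * x i - s * x j := by simp [rotFun]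

lemma rotFun_apply_j {i j : Fin d} (hij : i ≠ j) (c s : ℝ) (x : EuclideanSpace ℝ (Fin d)) :
    rotFun i j c s x j = s * x i + c * x j := by simp [rotFun, Ne.symm hij]

lemma rotFun_apply_other {i j l : Fin d} (hli : l ≠ i) (hlj : l ≠ j) (c s : ℝ)
    (x : EuclideanSpace ℝ (Fin d)) : rotFun i j c s x l = x l := by simp [rotFun, hli, hlj]

def rotLin (i j : Fin d) (c s : ℝ) :
    EuclideanSpace ℝ (Fin d) →ₗ[ℝ] EuclideanSpace ℝ (Fin d) where
  toFun := rotFun i j c s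
  map_add' x y := by
    ext l
    simp only [rotFun, PiLp.add_apply, PiLp.toLp_apply]
    split_ifs <;> ring
  map_smul' r x := by
    ext l
    simp only [rotFun, PiLp.toLp_apply, PiLp.smul_apply, smul_eq_mul, RingHom.id_apply]
    split_ifs <;> ring

lemma sum_split {i j : Fin d} (hij : i ≠ j) (F : Fin d → ℝ) :
    ∑ l, F l = F i + (F j + ∑ l ∈ (Finset.univ.erase i).erase j, F l) := by
  rw [← Finset.add_sum_erase _ F (Finset.mem_univ i),
    ← Finset.add_sum_erase _ F (Finset.mem_erase.mpr ⟨Ne.symm hij, Finset.mem_univ j⟩)]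

lemma prod_split {i j : Fin d} (hij : i ≠ j) (F : Fin d → ℝ) :
    ∏ l, F l = F i * (F j * ∏ l ∈ (Finset.univ.erase i).erase j, F l) := by
  rw [← Finset.mul_prod_erase _ F (Finset.mem_univ i),
    ← Finset.mul_prod_erase _ F (Finset.mem_erase.mpr ⟨Ne.symm hij, Finset.mem_univ j⟩)]

lemma rotFun_norm {i j : Fin d} (hij : i ≠ j) {c s : ℝ} (hc : c ^ 2 + s ^ 2 = 1)
    (x : EuclideanSpace ℝ (Fin d)) : ‖rotFun i j c s x‖ = ‖x‖ := by
  rw [EuclideanSpace.norm_eq, EuclideanSpace.norm_eq]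
  congr 1
  rw [sum_split hij (fun l => ‖rotFun i j c s x l‖ ^ 2), sum_split hij (fun l => ‖x l‖ ^ 2)]
  have h3 : ∀ l ∈ (Finset.univ.erase i).erase j,
      ‖rotFun i j c s x l‖ ^ 2 = ‖x l‖ ^ 2 := by
    intro l hl
    rw [rotFun_apply_other (Finset.mem_erase.mp (Finset.mem_erase.mp hl).2).1
      (Finset.mem_erase.mp hl).1]
  rw [Finset.sum_congr rfl h3, rotFun_apply_i, rotFun_apply_j hij]
  simp only [Real.norm_eq_abs, sq_abs]
  have : (c * x i - s * x j) ^ 2 + (s * x i + c * x j) ^ 2 = x i ^ 2 + x j ^ 2 := by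
    linear_combination (x i ^ 2 + x j ^ 2) * hc
  linarith [this]

lemma rotFun_invol {i j : Fin d} (hij : i ≠ j) {c s : ℝ} (hc : c ^ 2 + s ^ 2 = 1)
    (x : EuclideanSpace ℝ (Fin d)) : rotFun i j c (-s) (rotFun i j c s x) = x := by
  ext l
  by_cases hli : l = i
  · subst hli
    rw [rotFun_apply_i, rotFun_apply_i, rotFun_apply_j hij]
    linear_combination (x l) * hc
  · by_cases hlj : l = j
    · subst hlj
      rw [rotFun_apply_j hij, rotFun_apply_i, rotFun_apply_j hij]
      linear_combination (x l) * hc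
    · rw [rotFun_apply_other hli hlj, rotFun_apply_other hli hlj]

/-- Rotation in the `(i,j)`-plane as a linear isometry equivalence. -/
def rotEquiv (i j : Fin d) (hij : i ≠ j) (c s : ℝ) (hc : c ^ 2 + s ^ 2 = 1) :
    EuclideanSpace ℝ (Fin d) ≃ₗᵢ[ℝ] EuclideanSpace ℝ (Fin d) where
  toLinearEquiv := LinearEquiv.ofLinear (rotLin i j c s) (rotLin i j c (-s))
    (by
      apply LinearMap.ext
      intro x
      have hc' : c ^ 2 + (-s) ^ 2 = 1 := by rw [neg_pow]; simpa using hc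
      have := rotFun_invol hij hc' x
      rw [neg_neg] at this
      exact this)
    (by
      apply LinearMap.ext
      intro x
      exact rotFun_invol hij hc x)
  norm_map' := rotFun_norm hij hc

lemma rotEquiv_apply (i j : Fin d) (hij : i ≠ j) (c s : ℝ) (hc : c ^ 2 + s ^ 2 = 1)
    (x : EuclideanSpace ℝ (Fin d)) : rotEquiv i j hij c s hc x = rotFun i j c s x := rfl

/-- Reflection of coordinate `i`. -/
def reflFun (i : Fin d) (x : EuclideanSpace ℝ (Fin d)) : EuclideanSpace ℝ (Fin d) :=
  WithLp.toLp 2 (fun l => if l = i then -(x l) else x l)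

def reflLin (i : Fin d) :
    EuclideanSpace ℝ (Fin d) →ₗ[ℝ] EuclideanSpace ℝ (Fin d) where
  toFun := reflFun i
  map_add' x y := by
    ext l
    simp only [reflFun, PiLp.add_apply, PiLp.toLp_apply]
    split_ifs <;> ring
  map_smul' r x := by
    ext l
    simp only [reflFun, PiLp.toLp_apply, PiLp.smul_apply, smul_eq_mul, RingHom.id_apply]
    split_ifs <;> ring

lemma reflFun_invol (i : Fin d) (x : EuclideanSpace ℝ (Fin d)) :
    reflFun i (reflFun i x) = x := by
  ext l
  simp only [reflFun, PiLp.toLp_apply]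
  split_ifs <;> simp

def reflEquiv (i : Fin d) :
    EuclideanSpace ℝ (Fin d) ≃ₗᵢ[ℝ] EuclideanSpace ℝ (Fin d) where
  toLinearEquiv := LinearEquiv.ofLinear (reflLin i) (reflLin i)
    (LinearMap.ext fun x => reflFun_invol i x)
    (LinearMap.ext fun x => reflFun_invol i x)
  norm_map' := fun x => by
    rw [EuclideanSpace.norm_eq, EuclideanSpace.norm_eq]
    congr 1
    refine Finset.sum_congr rfl fun l _ => ?_
    show ‖reflFun i x l‖ ^ 2 = _
    simp only [reflFun, PiLp.toLp_apply]
    split_ifs <;> simp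

lemma reflEquiv_apply (i : Fin d) (x : EuclideanSpace ℝ (Fin d)) :
    reflEquiv i x = reflFun i x := rfl

end SphRot

noncomputable section SphMeas

/-- The surface measure on the unit sphere of `ℝ^d`: the `(d-1)`-dimensional Hausdorff
measure on the sphere. -/
noncomputable def sphereMeasure (d : ℕ) :
    Measure (Metric.sphere (0 : EuclideanSpace ℝ (Fin d)) 1) :=
  μH[(d : ℝ) - 1]

/-- The surface measure on the unit sphere (copy of the problem statement's def). -/
def sphereMeasure' (d : ℕ) :
    Measure (Metric.sphere (0 : EuclideanSpace ℝ (Fin d)) 1) :=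
  μH[(d : ℝ) - 1]

variable {d : ℕ}

/-- coordinate bound -/
lemma coord_le_norm (v : EuclideanSpace ℝ (Fin d)) (i : Fin d) : |v i| ≤ ‖v‖ := by
  rw [EuclideanSpace.norm_eq]
  have h1 : |v i| = Real.sqrt (‖v i‖ ^ 2) := by
    rw [Real.sqrt_sq_eq_abs]; simp
  rw [h1]
  apply Real.sqrt_le_sqrt
  exact Finset.single_le_sum (f := fun l => ‖v l‖ ^ 2) (fun l _ => by positivity)
    (Finset.mem_univ i)

/-- A linear isometry equivalence restricts to an isometry equivalence of the unit sphere. -/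
def sphMap (e : EuclideanSpace ℝ (Fin d) ≃ₗᵢ[ℝ] EuclideanSpace ℝ (Fin d)) :
    Metric.sphere (0 : EuclideanSpace ℝ (Fin d)) 1 ≃ᵢ
      Metric.sphere (0 : EuclideanSpace ℝ (Fin d)) 1 where
  toFun := fun ω => ⟨e ω, by
    rw [mem_sphere_zero_iff_norm, e.norm_map]
    exact mem_sphere_zero_iff_norm.mp ω.2⟩
  invFun := fun ω => ⟨e.symm ω, by
    rw [mem_sphere_zero_iff_norm, e.symm.norm_map]
    exact mem_sphere_zero_iff_norm.mp ω.2⟩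
  left_inv := fun ω => by ext; simp
  right_inv := fun ω => by ext; simp
  isometry_toFun := Isometry.of_dist_eq fun a b => by
    rw [Subtype.dist_eq, Subtype.dist_eq]
    exact e.dist_map _ _

lemma sphMap_measurePreserving (e : EuclideanSpace ℝ (Fin d) ≃ₗᵢ[ℝ] EuclideanSpace ℝ (Fin d)) :
    MeasurePreserving (sphMap e) (sphereMeasure' d) (sphereMeasure' d) :=
  (sphMap e).measurePreserving_hausdorffMeasure _

lemma integral_sphMap (e : EuclideanSpace ℝ (Fin d) ≃ₗᵢ[ℝ] EuclideanSpace ℝ (Fin d))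
    (f : Metric.sphere (0 : EuclideanSpace ℝ (Fin d)) 1 → ℝ) :
    ∫ ω, f (sphMap e ω) ∂(sphereMeasure' d) = ∫ ω, f ω ∂(sphereMeasure' d) :=
  (sphMap_measurePreserving e).integral_comp
    (sphMap e).toHomeomorph.measurableEmbedding f

/-! ### Finiteness of the sphere measure -/

lemma hausdorff_closedBall_lt_top (n : ℕ) (r : ℝ) :
    μH[(n : ℝ)] (Metric.closedBall (0 : EuclideanSpace ℝ (Fin n)) r) < ⊤ := by
  have h1 : ((n : ℝ)) = ((Module.finrank ℝ (EuclideanSpace ℝ (Fin n)) : ℕ) : ℝ) := by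
    rw [finrank_euclideanSpace_fin]
  rw [h1]
  haveI := MeasureTheory.isAddHaarMeasure_hausdorffMeasure
    (E := EuclideanSpace ℝ (Fin n))
  exact (isCompact_closedBall _ _).measure_lt_top

section Insert

variable {n : ℕ}

/-- Insert a fixed value as coordinate `i`. -/
def emb (i : Fin (n + 1)) (c : ℝ) :
    EuclideanSpace ℝ (Fin n) → EuclideanSpace ℝ (Fin (n + 1)) :=
  fun y => WithLp.toLp 2 (i.insertNth c (WithLp.ofLp y))

lemma emb_isometry (i : Fin (n + 1)) (c : ℝ) : Isometry (emb i c) := by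
  apply Isometry.of_dist_eq
  intro y z
  rw [EuclideanSpace.dist_eq, EuclideanSpace.dist_eq]
  congr 1
  rw [Fin.sum_univ_succAbove (fun l => dist (emb i c y l) (emb i c z l) ^ 2) i]
  simp only [emb, PiLp.toLp_apply, Fin.insertNth_apply_same, Fin.insertNth_apply_succAbove]
  simp

/-- Radial projection. -/
def rproj : EuclideanSpace ℝ (Fin (n + 1)) → EuclideanSpace ℝ (Fin (n + 1)) :=
  fun v => ‖v‖⁻¹ • v

lemma rproj_lipschitz :
    LipschitzOnWith 2 (rproj (n := n)) {v : EuclideanSpace ℝ (Fin (n + 1)) | 1 ≤ ‖v‖} := by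
  rw [lipschitzOnWith_iff_dist_le_mul]
  intro x hx y hy
  simp only [Set.mem_setOf_eq] at hx hy
  have hax : (0 : ℝ) < ‖x‖ := lt_of_lt_of_le one_pos hx
  have hay : (0 : ℝ) < ‖y‖ := lt_of_lt_of_le one_pos hy
  have key : dist (rproj x) (rproj y)
      ≤ ‖x‖⁻¹ * ‖x - y‖ + |‖x‖⁻¹ - ‖y‖⁻¹| * ‖y‖ := by
    rw [dist_eq_norm]
    have : rproj (n := n) x - rproj y = ‖x‖⁻¹ • (x - y) + (‖x‖⁻¹ - ‖y‖⁻¹) • y := by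
      unfold rproj
      rw [smul_sub, sub_smul]
      abel
    rw [this]
    refine (norm_add_le _ _).trans ?_
    rw [norm_smul, norm_smul]
    gcongr <;> simp [abs_of_pos, hax, le_refl]
  have h2 : |‖x‖⁻¹ - ‖y‖⁻¹| * ‖y‖ ≤ ‖x - y‖ := by
    have : ‖x‖⁻¹ - ‖y‖⁻¹ = (‖y‖ - ‖x‖) / (‖x‖ * ‖y‖) := by
      field_simp
    rw [this, abs_div]
    rw [abs_of_pos (by positivity : (0:ℝ) < ‖x‖ * ‖y‖)]
    rw [div_mul_eq_mul_div, div_le_iff₀ (by positivity)]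
    have h3 : |‖y‖ - ‖x‖| ≤ ‖x - y‖ := by
      rw [abs_sub_comm]
      exact abs_norm_sub_norm_le _ _
    calc |‖y‖ - ‖x‖| * ‖y‖ ≤ ‖x - y‖ * ‖y‖ := by gcongr
    _ ≤ ‖x - y‖ * (‖x‖ * ‖y‖) :=
      mul_le_mul_of_nonneg_left (le_mul_of_one_le_left hay.le hx) (norm_nonneg _)
  have h1 : ‖x‖⁻¹ * ‖x - y‖ ≤ ‖x - y‖ := by
    have : ‖x‖⁻¹ ≤ 1 := by
      rw [inv_le_one_iff₀]; right; exact hx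
    nlinarith [norm_nonneg (x - y)]
  have hfin := key.trans (add_le_add h1 h2)
  simp only [dist_eq_norm] at hfin ⊢
  push_cast
  linarith

lemma sphere_subset_cover :
    Metric.sphere (0 : EuclideanSpace ℝ (Fin (n + 1))) 1 ⊆
      ⋃ (i : Fin (n + 1)) (s : Bool),
        (rproj ∘ emb i (if s then 1 else -1)) ''
          (Metric.closedBall (0 : EuclideanSpace ℝ (Fin n)) (Real.sqrt (n + 1))) := by
  intro ω hω
  have hnorm : ‖ω‖ = 1 := mem_sphere_zero_iff_norm.mp hω
  obtain ⟨i, -, hi⟩ := Finset.exists_max_image Finset.univ (fun l => |ω l|)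
    ⟨0, Finset.mem_univ 0⟩
  have hi' : ∀ l, |ω l| ≤ |ω i| := fun l => hi l (Finset.mem_univ l)
  have hωne : ω ≠ 0 := by
    intro h
    rw [h] at hnorm
    simp at hnorm
  have hpos : 0 < |ω i| := by
    rcases Function.ne_iff.mp (by simpa using (WithLp.ofLp_injective 2).ne hωne : WithLp.ofLp ω ≠ 0) with ⟨l, hl⟩
    calc (0:ℝ) < |ω l| := by simpa using hl
    _ ≤ |ω i| := hi' l
  set t := |ω i| with ht
  set s : Bool := decide (0 ≤ ω i) with hs
  have hc : ω i = t * (if s then 1 else -1) := by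
    rcases le_or_gt 0 (ω i) with h | h
    · simp [hs, h, ht, abs_of_nonneg h]
    · simp [hs, not_le.mpr h, ht, abs_of_neg h]
  set y : EuclideanSpace ℝ (Fin n) := WithLp.toLp 2 (fun j => t⁻¹ * ω (i.succAbove j)) with hy
  refine Set.mem_iUnion.mpr ⟨i, Set.mem_iUnion.mpr ⟨s, ⟨y, ?_, ?_⟩⟩⟩
  · -- y ∈ closedBall
    rw [Metric.mem_closedBall, dist_zero_right, EuclideanSpace.norm_eq]
    have hterm : ∀ j : Fin n, ‖y j‖ ^ 2 ≤ 1 := by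
      intro j
      have : |y j| ≤ 1 := by
        rw [hy]
        simp only [PiLp.toLp_apply, abs_mul, abs_inv]
        rw [abs_of_pos hpos]
        calc t⁻¹ * |ω (i.succAbove j)| ≤ t⁻¹ * t := by
              gcongr
              exact hi' _
        _ = 1 := inv_mul_cancel₀ (ne_of_gt hpos)
      calc ‖y j‖ ^ 2 = |y j| ^ 2 := by simp
      _ ≤ 1 ^ 2 := by gcongr
      _ = 1 := one_pow 2
    have hsum : ∑ j : Fin n, ‖y j‖ ^ 2 ≤ (n : ℝ) + 1 := by
      calc ∑ j : Fin n, ‖y j‖ ^ 2 ≤ ∑ _j : Fin n, (1:ℝ) :=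
            Finset.sum_le_sum fun j _ => hterm j
      _ = n := by simp
      _ ≤ (n : ℝ) + 1 := by linarith
    calc Real.sqrt (∑ j : Fin n, ‖y j‖ ^ 2) ≤ Real.sqrt ((n:ℝ) + 1) :=
          Real.sqrt_le_sqrt hsum
    _ = Real.sqrt ((n:ℕ) + 1 : ℝ) := by norm_num
  · -- maps to ω
    have hemb : emb i (if s then 1 else -1) y = t⁻¹ • ω := by
      ext l
      refine Fin.succAboveCases i ?_ ?_ l
      · simp only [emb, PiLp.toLp_apply, Fin.insertNth_apply_same]
        have : (t⁻¹ • ω) i = t⁻¹ * ω i := rfl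
        rw [this, hc]
        field_simp
      · intro j
        simp only [emb, PiLp.toLp_apply, Fin.insertNth_apply_succAbove]
        rfl
    rw [Function.comp_apply, hemb]
    unfold rproj
    have hnn : ‖t⁻¹ • ω‖ = t⁻¹ := by
      rw [norm_smul, hnorm, mul_one, Real.norm_eq_abs, abs_of_pos (inv_pos.mpr hpos)]
    rw [hnn, inv_inv, smul_smul, mul_inv_cancel₀ (ne_of_gt hpos), one_smul]

end Insert

lemma sphereMeasure_univ_lt_top (hd : 1 ≤ d) :
    sphereMeasure' d Set.univ < ⊤ := by
  obtain ⟨n, rfl⟩ : ∃ n, d = n + 1 := ⟨d - 1, by omega⟩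
  have hcast : ((n + 1 : ℕ) : ℝ) - 1 = (n : ℝ) := by push_cast; ring
  unfold sphereMeasure'
  rw [hcast]
  have hle : (0:ℝ) ≤ (n : ℝ) := by positivity
  have h1 : μH[(n : ℝ)] (Set.univ : Set (Metric.sphere (0 : EuclideanSpace ℝ (Fin (n+1))) 1))
      = μH[(n : ℝ)] ((Subtype.val : (Metric.sphere (0 : EuclideanSpace ℝ (Fin (n+1))) 1) →
          EuclideanSpace ℝ (Fin (n+1))) '' Set.univ) :=
    (isometry_subtype_coe.hausdorffMeasure_image (Or.inl hle) _).symm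
  rw [h1, Subtype.coe_image_univ]
  refine lt_of_le_of_lt (measure_mono sphere_subset_cover) ?_
  refine lt_of_le_of_lt (measure_iUnion_le _) ?_
  rw [tsum_fintype]
  refine ENNReal.sum_lt_top.mpr fun i _ => ?_
  refine lt_of_le_of_lt (measure_iUnion_le _) ?_
  rw [tsum_fintype]
  refine ENNReal.sum_lt_top.mpr fun s _ => ?_
  have hlip : LipschitzOnWith (2 * 1) (rproj ∘ emb i (if s then 1 else -1))
      (Metric.closedBall (0 : EuclideanSpace ℝ (Fin n)) (Real.sqrt (n + 1))) := by
    refine LipschitzOnWith.comp (rproj_lipschitz)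
      ((emb_isometry i (if s then 1 else -1)).lipschitz.lipschitzOnWith
        (s := Metric.closedBall (0 : EuclideanSpace ℝ (Fin n)) (Real.sqrt (n + 1)))) ?_
    intro y _
    simp only [Set.mem_setOf_eq]
    calc (1:ℝ) = |(if s then (1:ℝ) else -1)| := by rcases s <;> simp
    _ = |emb i (if s then (1:ℝ) else -1) y i| := by rw [emb, PiLp.toLp_apply, Fin.insertNth_apply_same]
    _ ≤ ‖emb i (if s then (1:ℝ) else -1) y‖ := coord_le_norm _ _
  refine lt_of_le_of_lt (hlip.hausdorffMeasure_image_le hle) ?_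
  apply ENNReal.mul_lt_top
  · exact ENNReal.rpow_lt_top_of_nonneg hle ENNReal.coe_ne_top
  · exact hausdorff_closedBall_lt_top n _

end SphMeas

noncomputable section SphMom

variable {d : ℕ}

/-- Update two coordinates of a multi-index. -/
def upd2 (i j : Fin d) (a b : ℕ) (A : Fin d → ℕ) : Fin d → ℕ :=
  fun l => if l = i then a else if l = j then b else A l

lemma upd2_apply_i (i j : Fin d) (a b : ℕ) (A : Fin d → ℕ) : upd2 i j a b A i = a := by
  simp [upd2]

lemma upd2_apply_j {i j : Fin d} (hij : i ≠ j) (a b : ℕ) (A : Fin d → ℕ) :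
    upd2 i j a b A j = b := by simp [upd2, Ne.symm hij]

lemma upd2_apply_other {i j l : Fin d} (hli : l ≠ i) (hlj : l ≠ j) (a b : ℕ)
    (A : Fin d → ℕ) : upd2 i j a b A l = A l := by simp [upd2, hli, hlj]

lemma upd2_upd2 (i j : Fin d) (a b a' b' : ℕ) (A : Fin d → ℕ) :
    upd2 i j a b (upd2 i j a' b' A) = upd2 i j a b A := by
  funext l
  by_cases hli : l = i
  · subst hli; simp [upd2]
  · by_cases hlj : l = j
    · subst hlj; simp [upd2, hli]
    · simp [upd2, hli, hlj]

lemma upd2_self {i j : Fin d} (hij : i ≠ j) (A : Fin d → ℕ) : upd2 i j (A i) (A j) A = A := by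
  funext l
  by_cases hli : l = i
  · subst hli; simp [upd2]
  · by_cases hlj : l = j
    · subst hlj; simp [upd2, hli]
    · simp [upd2, hli, hlj]

/-- Moments of the sphere measure. -/
def Mm (a : Fin d → ℕ) : ℝ :=
  ∫ ω, ∏ l, ((ω : EuclideanSpace ℝ (Fin d)) l) ^ a l ∂(sphereMeasure' d)

lemma coord_cont (l : Fin d) :
    Continuous (fun ω : Metric.sphere (0 : EuclideanSpace ℝ (Fin d)) 1 =>
      ((ω : EuclideanSpace ℝ (Fin d)) l)) :=
  (EuclideanSpace.proj (𝕜 := ℝ) l).continuous.comp continuous_subtype_val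

lemma mon_cont (a : Fin d → ℕ) :
    Continuous (fun ω : Metric.sphere (0 : EuclideanSpace ℝ (Fin d)) 1 =>
      ∏ l, ((ω : EuclideanSpace ℝ (Fin d)) l) ^ a l) :=
  continuous_finset_prod _ fun l _ => (coord_cont l).pow _

lemma integrable_sph (hd : 1 ≤ d)
    {f : Metric.sphere (0 : EuclideanSpace ℝ (Fin d)) 1 → ℝ} (hf : Continuous f) :
    Integrable f (sphereMeasure' d) := by
  haveI : IsFiniteMeasure (sphereMeasure' d) := ⟨sphereMeasure_univ_lt_top hd⟩
  obtain ⟨C, hC⟩ := IsCompact.exists_bound_of_continuousOn isCompact_univ hf.continuousOn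
  exact Integrable.mono' (integrable_const C) hf.aestronglyMeasurable
    (Filter.Eventually.of_forall fun ω => hC ω (Set.mem_univ _))

/-- Reflection: moments with an odd entry vanish. -/
lemma Mm_odd (a : Fin d → ℕ) (i : Fin d) (hodd : ¬ Even (a i)) : Mm a = 0 := by
  classical
  have hodd' : Odd (a i) := Nat.not_even_iff_odd.mp hodd
  have hinv := integral_sphMap (reflEquiv i)
    (fun ω => ∏ l, ((ω : EuclideanSpace ℝ (Fin d)) l) ^ a l)
  have hpt : ∀ ω : Metric.sphere (0 : EuclideanSpace ℝ (Fin d)) 1,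
      (∏ l, (((sphMap (reflEquiv i) ω : Metric.sphere (0 : EuclideanSpace ℝ (Fin d)) 1) :
          EuclideanSpace ℝ (Fin d)) l) ^ a l)
        = -(∏ l, ((ω : EuclideanSpace ℝ (Fin d)) l) ^ a l) := by
    intro ω
    have hcoe : ((sphMap (reflEquiv i) ω : Metric.sphere (0 : EuclideanSpace ℝ (Fin d)) 1) :
        EuclideanSpace ℝ (Fin d)) = reflFun i (ω : EuclideanSpace ℝ (Fin d)) := rfl
    rw [hcoe,
      ← Finset.mul_prod_erase Finset.univ
        (fun l => (reflFun i (ω : EuclideanSpace ℝ (Fin d)) l) ^ a l) (Finset.mem_univ i),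
      ← Finset.mul_prod_erase Finset.univ
        (fun l => ((ω : EuclideanSpace ℝ (Fin d)) l) ^ a l) (Finset.mem_univ i)]
    have htail : ∀ l ∈ Finset.univ.erase i,
        (reflFun i (ω : EuclideanSpace ℝ (Fin d)) l) ^ a l
          = ((ω : EuclideanSpace ℝ (Fin d)) l) ^ a l := by
      intro l hl
      rw [show reflFun i (ω : EuclideanSpace ℝ (Fin d)) l
          = (ω : EuclideanSpace ℝ (Fin d)) l by simp [reflFun, (Finset.mem_erase.mp hl).1]]
    rw [Finset.prod_congr rfl htail,
      show reflFun i (ω : EuclideanSpace ℝ (Fin d)) i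
        = -((ω : EuclideanSpace ℝ (Fin d)) i) by simp [reflFun], hodd'.neg_pow]
    ring
  have h2 : ∫ ω, (∏ l, (((sphMap (reflEquiv i) ω :
        Metric.sphere (0 : EuclideanSpace ℝ (Fin d)) 1) :
        EuclideanSpace ℝ (Fin d)) l) ^ a l) ∂(sphereMeasure' d)
      = -Mm a := by
    rw [show (fun ω => ∏ l, (((sphMap (reflEquiv i) ω :
        Metric.sphere (0 : EuclideanSpace ℝ (Fin d)) 1) :
        EuclideanSpace ℝ (Fin d)) l) ^ a l)
      = fun ω : Metric.sphere (0 : EuclideanSpace ℝ (Fin d)) 1 =>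
          -(∏ l, ((ω : EuclideanSpace ℝ (Fin d)) l) ^ a l) from funext hpt]
    rw [integral_neg]
    rfl
  have : -Mm a = Mm a := by rw [← h2]; exact hinv
  linarith

/-- Rotation invariance: the fundamental moment recursion. -/
lemma Mm_rot (hd : 1 ≤ d) (i j : Fin d) (hij : i ≠ j) (A : Fin d → ℕ)
    (hp : 1 ≤ A i) (hq : 1 ≤ A j) :
    (A j : ℝ) * Mm (upd2 i j (A i + 1) (A j - 1) A)
      = (A i : ℝ) * Mm (upd2 i j (A i - 1) (A j + 1) A) := by
  classical
  haveI : IsFiniteMeasure (sphereMeasure' d) := ⟨sphereMeasure_univ_lt_top hd⟩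
  set p := A i with hpdef
  set q := A j with hqdef
  set F : Finset (ℕ × ℕ) := Finset.range (p + 1) ×ˢ Finset.range (q + 1) with hF
  set K : ℕ × ℕ → ℝ := fun rt =>
    (p.choose rt.1 : ℝ) * (q.choose rt.2 : ℝ) * (-1 : ℝ) ^ (p - rt.1)
      * Mm (upd2 i j (rt.1 + rt.2) ((p - rt.1) + (q - rt.2)) A) with hK
  have key : ∀ θ : ℝ,
      (∑ rt ∈ F, K rt * (Real.cos θ ^ (rt.1 + (q - rt.2))
        * Real.sin θ ^ ((p - rt.1) + rt.2))) = Mm A := by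
    intro θ
    have hc : Real.cos θ ^ 2 + Real.sin θ ^ 2 = 1 := Real.cos_sq_add_sin_sq θ
    set c := Real.cos θ
    set s := Real.sin θ
    have hpoint : ∀ v : EuclideanSpace ℝ (Fin d),
        (∏ l, (rotFun i j c s v l) ^ A l)
          = ∑ rt ∈ F, (p.choose rt.1 : ℝ) * (q.choose rt.2 : ℝ) * (-1 : ℝ) ^ (p - rt.1)
              * (c ^ (rt.1 + (q - rt.2)) * s ^ ((p - rt.1) + rt.2))
              * ∏ l, (v l) ^ (upd2 i j (rt.1 + rt.2) ((p - rt.1) + (q - rt.2)) A l) := by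
      intro v
      rw [prod_split hij (fun l => (rotFun i j c s v l) ^ A l)]
      have htail : ∀ l ∈ (Finset.univ.erase i).erase j,
          (rotFun i j c s v l) ^ A l = (v l) ^ A l := by
        intro l hl
        rw [rotFun_apply_other (Finset.mem_erase.mp (Finset.mem_erase.mp hl).2).1
          (Finset.mem_erase.mp hl).1]
      rw [Finset.prod_congr rfl htail, rotFun_apply_i, rotFun_apply_j hij]
      rw [show c * v i - s * v j = c * v i + -(s * v j) by ring, add_pow, add_pow]
      rw [← mul_assoc, Finset.sum_mul_sum, Finset.sum_mul, hF, Finset.sum_product]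
      refine Finset.sum_congr rfl fun r hr => ?_
      rw [Finset.sum_mul]
      refine Finset.sum_congr rfl fun t ht => ?_
      rw [prod_split hij
        (fun l => (v l) ^ (upd2 i j (r + t) ((p - r) + (q - t)) A l))]
      have htail2 : ∀ l ∈ (Finset.univ.erase i).erase j,
          (v l) ^ (upd2 i j (r + t) ((p - r) + (q - t)) A l) = (v l) ^ A l := by
        intro l hl
        rw [upd2_apply_other (Finset.mem_erase.mp (Finset.mem_erase.mp hl).2).1
          (Finset.mem_erase.mp hl).1]
      rw [Finset.prod_congr rfl htail2, upd2_apply_i, upd2_apply_j hij]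
      rw [neg_pow (s * v j) (p - r)]
      ring
    have hinv := integral_sphMap (rotEquiv i j hij c s hc)
      (fun ω => ∏ l, ((ω : EuclideanSpace ℝ (Fin d)) l) ^ A l)
    have hL : ∫ ω, (∏ l,
        (rotFun i j c s (ω : EuclideanSpace ℝ (Fin d)) l) ^ A l) ∂(sphereMeasure' d)
        = Mm A := hinv
    rw [show (fun ω : Metric.sphere (0 : EuclideanSpace ℝ (Fin d)) 1 =>
        ∏ l, (rotFun i j c s (ω : EuclideanSpace ℝ (Fin d)) l) ^ A l)
      = fun ω : Metric.sphere (0 : EuclideanSpace ℝ (Fin d)) 1 =>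
        ∑ rt ∈ F, (p.choose rt.1 : ℝ) * (q.choose rt.2 : ℝ) * (-1 : ℝ) ^ (p - rt.1)
              * (c ^ (rt.1 + (q - rt.2)) * s ^ ((p - rt.1) + rt.2))
              * ∏ l, ((ω : EuclideanSpace ℝ (Fin d)) l)
                  ^ (upd2 i j (rt.1 + rt.2) ((p - rt.1) + (q - rt.2)) A l)
      from funext fun ω => hpoint (ω : EuclideanSpace ℝ (Fin d))] at hL
    rw [integral_finset_sum F (fun rt _ => integrable_sph hd
      (continuous_const.fun_mul (mon_cont _)))] at hL
    rw [← hL]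
    refine Finset.sum_congr rfl fun rt _ => ?_
    rw [MeasureTheory.integral_const_mul]
    rw [hK]
    unfold Mm
    ring
  -- differentiate at 0
  have hderiv := HasDerivAt.fun_sum (u := F)
    (A := fun rt θ => K rt * (Real.cos θ ^ (rt.1 + (q - rt.2))
      * Real.sin θ ^ ((p - rt.1) + rt.2)))
    (x := (0:ℝ))
    (fun rt _ => (((Real.hasDerivAt_cos 0).pow _).mul
      ((Real.hasDerivAt_sin 0).pow _)).const_mul (K rt))
  rw [show (fun θ : ℝ => ∑ rt ∈ F, K rt * (Real.cos θ ^ (rt.1 + (q - rt.2))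
      * Real.sin θ ^ ((p - rt.1) + rt.2))) = fun _ : ℝ => Mm A
    from funext fun θ => key θ] at hderiv
  have hD0 := hderiv.unique (hasDerivAt_const _ _)
  simp only [Pi.pow_apply, Real.sin_zero, Real.cos_zero, neg_zero, mul_zero, zero_mul, one_pow,
    mul_one, one_mul, add_zero, zero_add] at hD0
  -- now hD0 : ∑ rt ∈ F, K rt * (↑((p - rt.1) + rt.2) * 0 ^ ((p - rt.1) + rt.2 - 1)) = 0
  have hsub : ({(p, 1), (p - 1, 0)} : Finset (ℕ × ℕ)) ⊆ F := by
    intro rt hrt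
    rw [hF]
    simp only [Finset.mem_insert, Finset.mem_singleton] at hrt
    rcases hrt with rfl | rfl <;>
      (rw [Finset.mem_product]; constructor <;> rw [Finset.mem_range] <;> omega)
  have hvanish : ∀ rt ∈ F, rt ∉ ({(p, 1), (p - 1, 0)} : Finset (ℕ × ℕ)) →
      K rt * ((((p - rt.1) + rt.2 : ℕ) : ℝ) * (0:ℝ) ^ ((p - rt.1) + rt.2 - 1)) = 0 := by
    intro rt hrtF hrt
    have hr1 : rt.1 ≤ p := by
      rw [hF, Finset.mem_product, Finset.mem_range, Finset.mem_range] at hrtF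
      omega
    rcases Nat.lt_or_ge ((p - rt.1) + rt.2) 1 with h | h
    · have h0 : (p - rt.1) + rt.2 = 0 := by omega
      rw [h0]; simp
    rcases Nat.lt_or_ge ((p - rt.1) + rt.2) 2 with h' | h'
    · exfalso
      have he : (p - rt.1) + rt.2 = 1 := by omega
      have : rt = (p, 1) ∨ rt = (p - 1, 0) := by
        rcases rt with ⟨r, t⟩
        simp only at he hr1 ⊢
        have : (r = p ∧ t = 1) ∨ (r = p - 1 ∧ t = 0) := by omega
        rcases this with ⟨rfl, rfl⟩ | ⟨rfl, rfl⟩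
        · left; rfl
        · right; rfl
      simp only [Finset.mem_insert, Finset.mem_singleton] at hrt
      tauto
    · rw [zero_pow (by omega : (p - rt.1) + rt.2 - 1 ≠ 0)]
      ring
  rw [← Finset.sum_subset hsub hvanish] at hD0
  have hne : ((p, 1) : ℕ × ℕ) ≠ (p - 1, 0) := by simp
  rw [Finset.sum_pair hne] at hD0
  -- compute the two terms
  have hterm1 : K (p, 1) * ((((p - p) + 1 : ℕ) : ℝ) * (0:ℝ) ^ ((p - p) + 1 - 1))
      = (q : ℝ) * Mm (upd2 i j (p + 1) (q - 1) A) := by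
    simp only [hK, Nat.sub_self, zero_add, pow_zero, Nat.choose_self, Nat.cast_one,
      Nat.choose_one_right, Nat.add_sub_cancel]
    ring
  have hterm2 : K (p - 1, 0) * ((((p - (p - 1)) + 0 : ℕ) : ℝ) * (0:ℝ) ^ ((p - (p - 1)) + 0 - 1))
      = -((p : ℝ) * Mm (upd2 i j (p - 1) (q + 1) A)) := by
    have h1 : p - (p - 1) = 1 := by omega
    have h2 : p.choose (p - 1) = p := by
      rw [← Nat.choose_symm (by omega : p - 1 ≤ p), h1, Nat.choose_one_right]
    have h5 : (1 : ℕ) + q = q + 1 := by omega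
    simp only [hK, h1, h2, add_zero, Nat.sub_zero, h5, Nat.choose_zero_right,
      Nat.cast_one, pow_one, pow_zero, Nat.add_sub_cancel]
    ring
  rw [hterm1, hterm2] at hD0
  linarith
end SphMom
noncomputable section SphChain

variable {d : ℕ}

lemma sum_splitN {i j : Fin d} (hij : i ≠ j) (F : Fin d → ℕ) :
    ∑ l, F l = F i + (F j + ∑ l ∈ (Finset.univ.erase i).erase j, F l) := by
  rw [← Finset.add_sum_erase _ F (Finset.mem_univ i),
    ← Finset.add_sum_erase _ F (Finset.mem_erase.mpr ⟨Ne.symm hij, Finset.mem_univ j⟩)]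

lemma Gm_move (i j : Fin d) (hij : i ≠ j) (b : Fin d → ℕ) (hbj2 : 2 ≤ b j) :
    ((b i : ℝ) + 1) * Gm b = ((b j : ℝ) - 1) * Gm (upd2 i j (b i + 2) (b j - 2) b) := by
  unfold Gm
  rw [prod_split hij (fun l => gm (b l)),
    prod_split hij (fun l => gm (upd2 i j (b i + 2) (b j - 2) b l))]
  have htail : ∀ l ∈ (Finset.univ.erase i).erase j,
      gm (upd2 i j (b i + 2) (b j - 2) b l) = gm (b l) := by
    intro l hl
    rw [upd2_apply_other (Finset.mem_erase.mp (Finset.mem_erase.mp hl).2).1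
      (Finset.mem_erase.mp hl).1]
  rw [Finset.prod_congr rfl htail, upd2_apply_i, upd2_apply_j hij]
  have hg1 : gm (b i + 2) = ((b i : ℝ) + 1) * gm (b i) := by
    have := gm_succ (b i + 1)
    rw [show b i + 1 + 1 = b i + 2 by omega, Nat.add_sub_cancel] at this
    rw [this]
    push_cast
    ring
  have hg2 : gm (b j) = ((b j : ℝ) - 1) * gm (b j - 2) := by
    have := gm_succ (b j - 1)
    rw [show b j - 1 + 1 = b j by omega, show b j - 1 - 1 = b j - 2 by omega] at this
    rw [this, Nat.cast_sub (by omega : 1 ≤ b j)]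
    push_cast
    ring
  rw [hg1, hg2]
  ring

lemma Mm_move (hd : 1 ≤ d) (i j : Fin d) (hij : i ≠ j) (b : Fin d → ℕ) (hbj2 : 2 ≤ b j) :
    ((b i : ℝ) + 1) * Mm b = ((b j : ℝ) - 1) * Mm (upd2 i j (b i + 2) (b j - 2) b) := by
  have h := Mm_rot hd i j hij (upd2 i j (b i + 1) (b j - 1) b)
    (by rw [upd2_apply_i]; omega) (by rw [upd2_apply_j hij]; omega)
  rw [upd2_apply_i, upd2_apply_j hij, upd2_upd2, upd2_upd2] at h
  rw [show b i + 1 + 1 = b i + 2 by omega, show b j - 1 - 1 = b j - 2 by omega,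
    Nat.add_sub_cancel, show b j - 1 + 1 = b j by omega, upd2_self hij,
    Nat.cast_sub (by omega : 1 ≤ b j)] at h
  push_cast at h
  linarith [h]

/-- Canonical multi-index concentrated at one coordinate. -/
def canonIdx (i0 : Fin d) (n : ℕ) : Fin d → ℕ := fun l => if l = i0 then n else 0

lemma Mm_canon (hd : 1 ≤ d) (i0 : Fin d) :
    ∀ N (b : Fin d → ℕ), (∀ l, Even (b l)) → (∑ l ∈ Finset.univ.erase i0, b l = N) →
      Mm b * Gm (canonIdx i0 (∑ l, b l)) = Mm (canonIdx i0 (∑ l, b l)) * Gm b := by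
  intro N
  induction N using Nat.strong_induction_on with
  | _ N IH =>
    intro b heven hN
    by_cases hb : ∃ j ∈ Finset.univ.erase i0, b j ≠ 0
    · obtain ⟨j, hjmem, hbj⟩ := hb
      have hji0 : j ≠ i0 := (Finset.mem_erase.mp hjmem).1
      have hij : i0 ≠ j := Ne.symm hji0
      have hbj2 : 2 ≤ b j := by
        rcases heven j with ⟨t, ht⟩
        omega
      set b' := upd2 i0 j (b i0 + 2) (b j - 2) b with hb'
      have htail : ∀ l ∈ (Finset.univ.erase i0).erase j, b' l = b l := by
        intro l hl
        rw [hb', upd2_apply_other (Finset.mem_erase.mp (Finset.mem_erase.mp hl).2).1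
          (Finset.mem_erase.mp hl).1]
      have heven' : ∀ l, Even (b' l) := by
        intro l
        by_cases hli : l = i0
        · rw [hb', hli, upd2_apply_i]
          exact (heven i0).add (by norm_num)
        · by_cases hlj : l = j
          · rw [hb', hlj, upd2_apply_j hij]
            rw [Nat.even_sub hbj2]
            simp [heven j]
          · rw [hb', upd2_apply_other hli hlj]
            exact heven l
      have hsum' : ∑ l, b' l = ∑ l, b l := by
        rw [sum_splitN hij b', sum_splitN hij b, Finset.sum_congr rfl htail]
        rw [hb', upd2_apply_i, upd2_apply_j hij,
          show ((Finset.univ.erase i0).erase j).sum b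
            = ∑ l ∈ (Finset.univ.erase i0).erase j, b l from rfl]
        omega
      have hNsub : ∑ l ∈ Finset.univ.erase i0, b' l = N - 2 := by
        have h1 : ∑ l ∈ Finset.univ.erase i0, b' l
            = b' j + ∑ l ∈ (Finset.univ.erase i0).erase j, b' l :=
          (Finset.add_sum_erase _ b' hjmem).symm
        have h2 : ∑ l ∈ Finset.univ.erase i0, b l
            = b j + ∑ l ∈ (Finset.univ.erase i0).erase j, b l :=
          (Finset.add_sum_erase _ b hjmem).symm
        rw [h1, Finset.sum_congr rfl htail, hb', upd2_apply_j hij,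
          show ((Finset.univ.erase i0).erase j).sum b
            = ∑ l ∈ (Finset.univ.erase i0).erase j, b l from rfl]
        rw [h2] at hN
        omega
      have hNlt : N - 2 < N := by
        have h2le : 2 ≤ N := by
          rw [← hN]
          exact le_trans hbj2 (Finset.single_le_sum (fun l _ => Nat.zero_le _) hjmem)
        omega
      have hM := Mm_move hd i0 j hij b hbj2
      have hG := Gm_move i0 j hij b hbj2
      have hcross : Mm b * Gm b' = Mm b' * Gm b := by
        apply mul_left_cancel₀ (show ((b i0 : ℝ) + 1) ≠ 0 by positivity)
        rw [hb']
        linear_combination (Gm b') * hM - (Mm b') * hG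
      have hIH := IH (N - 2) hNlt b' heven' hNsub
      rw [hsum'] at hIH
      have hGb' : Gm b' ≠ 0 := ne_of_gt (Gm_pos b' heven')
      apply mul_right_cancel₀ hGb'
      linear_combination (Gm (canonIdx i0 (∑ l, b l))) * hcross + (Gm b) * hIH
    · push_neg at hb
      have hzero : ∀ l ∈ Finset.univ.erase i0, b l = 0 := hb
      have hbc : b = canonIdx i0 (∑ l, b l) := by
        funext l
        by_cases hl : l = i0
        · subst hl
          show b l = if l = l then ∑ l', b l' else 0
          rw [if_pos rfl, ← Finset.add_sum_erase _ b (Finset.mem_univ l),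
            Finset.sum_eq_zero hzero, add_zero]
        · show b l = if l = i0 then _ else 0
          rw [if_neg hl]
          exact hzero l (Finset.mem_erase.mpr ⟨hl, Finset.mem_univ l⟩)
      rw [← hbc]

lemma Lm_support (Q : MvPolynomial (Fin d) ℝ) :
    Lm Q = ∑ a ∈ Q.support, coeff a Q * Gm (fun l => a l) := rfl

/-- Key: integrals over the sphere of homogeneous polynomials with vanishing Gaussian
moment functional vanish. -/
lemma sphere_int_zero (hd : 1 ≤ d) (n : ℕ) (Q : MvPolynomial (Fin d) ℝ)
    (hQ : Q.IsHomogeneous n) (hL : Lm Q = 0) :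
    ∫ ω, MvPolynomial.eval (fun l => ((ω : EuclideanSpace ℝ (Fin d)) l)) Q
      ∂(sphereMeasure' d) = 0 := by
  classical
  have i0 : Fin d := ⟨0, by omega⟩
  have hdeg : ∀ a ∈ Q.support, ∑ l, (a : Fin d →₀ ℕ) l = n := by
    intro a ha
    have h := hQ (mem_support_iff.mp ha)
    rw [← degree_eq_sum_univ, Finsupp.degree_eq_weight_one]
    exact h
  have hrw : ∫ ω, MvPolynomial.eval (fun l => ((ω : EuclideanSpace ℝ (Fin d)) l)) Q
        ∂(sphereMeasure' d)
      = ∑ a ∈ Q.support, coeff a Q * Mm (fun l => a l) := by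
    rw [show (fun ω : Metric.sphere (0 : EuclideanSpace ℝ (Fin d)) 1 =>
        MvPolynomial.eval (fun l => ((ω : EuclideanSpace ℝ (Fin d)) l)) Q)
      = fun ω : Metric.sphere (0 : EuclideanSpace ℝ (Fin d)) 1 =>
          ∑ a ∈ Q.support, coeff a Q * ∏ l, ((ω : EuclideanSpace ℝ (Fin d)) l) ^ a l
      from funext fun ω => eval_eq' _ _]
    rw [integral_finset_sum _ (fun a _ => integrable_sph hd
      (continuous_const.fun_mul (mon_cont _)))]
    exact Finset.sum_congr rfl fun a _ => MeasureTheory.integral_const_mul _ _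
  rw [hrw]
  by_cases hn : Even n
  · have hGc : Gm (canonIdx i0 n) ≠ 0 := by
      refine ne_of_gt (Gm_pos _ fun l => ?_)
      unfold canonIdx
      split_ifs
      · exact hn
      · exact Even.zero
    have hκ : ∀ a ∈ Q.support, Mm (fun l => (a : Fin d →₀ ℕ) l)
        = (Mm (canonIdx i0 n) / Gm (canonIdx i0 n)) * Gm (fun l => a l) := by
      intro a ha
      by_cases hev : ∀ l, Even ((a : Fin d →₀ ℕ) l)
      · have h := Mm_canon hd i0 (∑ l ∈ Finset.univ.erase i0, (a : Fin d →₀ ℕ) l)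
          (fun l => a l) hev rfl
        rw [hdeg a ha] at h
        rw [div_mul_eq_mul_div, eq_div_iff hGc]
        linarith [h]
      · push_neg at hev
        obtain ⟨l0, hl0⟩ := hev
        rw [Mm_odd _ l0 hl0, Gm_eq_zero _ l0 hl0]
        ring
    rw [Finset.sum_congr rfl fun a ha => by rw [hκ a ha]]
    have hpull : ∑ a ∈ Q.support, coeff a Q
          * ((Mm (canonIdx i0 n) / Gm (canonIdx i0 n)) * Gm (fun l => a l))
        = (Mm (canonIdx i0 n) / Gm (canonIdx i0 n))
          * ∑ a ∈ Q.support, coeff a Q * Gm (fun l => a l) := by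
      rw [Finset.mul_sum]
      exact Finset.sum_congr rfl fun a _ => by ring
    rw [hpull, ← Lm_support, hL, mul_zero]
  · refine Finset.sum_eq_zero fun a ha => ?_
    have hex : ∃ l, ¬ Even ((a : Fin d →₀ ℕ) l) := by
      by_contra hall
      push_neg at hall
      apply hn
      rw [← hdeg a ha]
      exact Finset.even_sum _ (fun l _ => hall l)
    obtain ⟨l0, hl0⟩ := hex
    rw [Mm_odd _ l0 hl0, mul_zero]

end SphChain
noncomputable section SphFinal

variable {d : ℕ}

lemma relu_int (k' : ℕ) {R t : ℝ} (hRt : -R ≤ t) (htR : t ≤ R) :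
    ∫ b in Set.Ioo (-R) R, max (t - b) 0 * b ^ k'
      = (1/(k'+1) - 1/(k'+2)) * t^(k'+2) + (-((-R)^(k'+1))/(k'+1)) * t
          + (-R)^(k'+2)/(k'+2) := by
  have hRR : -R ≤ R := by linarith
  have hcont : Continuous fun b : ℝ => max (t - b) 0 * b ^ k' :=
    ((continuous_const.sub continuous_id).max continuous_const).mul (continuous_pow k')
  rw [← integral_Ioc_eq_integral_Ioo, ← intervalIntegral.integral_of_le hRR]
  rw [← intervalIntegral.integral_add_adjacent_intervals (b := t)
    (hcont.intervalIntegrable _ _) (hcont.intervalIntegrable _ _)]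
  have h2 : ∫ b in t..R, max (t - b) 0 * b ^ k' = 0 := by
    rw [intervalIntegral.integral_congr (g := fun _ => 0) ?_]
    · simp
    · intro b hb
      rw [Set.uIcc_of_le htR] at hb
      have hb0 : t - b ≤ 0 := by linarith [hb.1]
      simp [max_eq_right hb0]
  have h1 : ∫ b in (-R)..t, max (t - b) 0 * b ^ k'
      = ∫ b in (-R)..t, (t * b ^ k' - b ^ (k'+1)) := by
    apply intervalIntegral.integral_congr
    intro b hb
    rw [Set.uIcc_of_le hRt] at hb
    have h0 : 0 ≤ t - b := by linarith [hb.2]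
    show max (t - b) 0 * b ^ k' = t * b ^ k' - b ^ (k'+1)
    rw [max_eq_left h0]
    ring
  rw [h2, add_zero, h1, intervalIntegral.integral_sub
    ((continuous_const.fun_mul (continuous_pow k')).intervalIntegrable _ _)
    ((continuous_pow (k'+1)).intervalIntegrable _ _),
    intervalIntegral.integral_const_mul, integral_pow, integral_pow]
  have hk1 : ((k' : ℝ) + 1) ≠ 0 := by positivity
  have hk2 : ((k' : ℝ) + 2) ≠ 0 := by positivity
  push_cast
  field_simp
  ring

lemma evalP_cont (P : MvPolynomial (Fin d) ℝ) :
    Continuous fun v : EuclideanSpace ℝ (Fin d) => MvPolynomial.eval (fun l => v l) P := by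
  rw [show (fun v : EuclideanSpace ℝ (Fin d) => MvPolynomial.eval (fun l => v l) P)
    = fun v => ∑ a ∈ P.support, coeff a P * ∏ l, (v l) ^ a l
    from funext fun v => eval_eq' _ _]
  exact continuous_finset_sum _ fun a _ => continuous_const.mul
    (continuous_finset_prod _ fun l _ => ((EuclideanSpace.proj (𝕜 := ℝ) l).continuous).pow _)

lemma integrable_on_strip (hd : 1 ≤ d) (R : ℝ)
    (F : (Metric.sphere (0 : EuclideanSpace ℝ (Fin d)) 1) × ℝ → ℝ) (hF : Continuous F) :
    Integrable F ((sphereMeasure' d).prod (volume.restrict (Set.Ioo (-R) R))) := by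
  haveI : IsFiniteMeasure (sphereMeasure' d) := ⟨sphereMeasure_univ_lt_top hd⟩
  haveI : IsFiniteMeasure (volume.restrict (Set.Ioo (-R) R)) :=
    ⟨by rw [Measure.restrict_apply_univ]; exact measure_Ioo_lt_top⟩
  obtain ⟨C, hC⟩ := ((isCompact_univ.prod isCompact_Icc :
    IsCompact ((Set.univ : Set (Metric.sphere (0 : EuclideanSpace ℝ (Fin d)) 1)) ×ˢ
      Set.Icc (-R) R))).exists_bound_of_continuousOn hF.continuousOn
  refine Integrable.mono' (integrable_const C) hF.aestronglyMeasurable ?_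
  rw [ae_iff]
  have hnull : ((sphereMeasure' d).prod (volume.restrict (Set.Ioo (-R) R)))
      {p | p.2 ∉ Set.Ioo (-R) R} = 0 := by
    have hset : {p : (Metric.sphere (0 : EuclideanSpace ℝ (Fin d)) 1) × ℝ |
        p.2 ∉ Set.Ioo (-R) R}
        = (Set.univ : Set (Metric.sphere (0 : EuclideanSpace ℝ (Fin d)) 1)) ×ˢ
            (Set.Ioo (-R) R)ᶜ := by
      ext p
      simp [Set.mem_prod]
    rw [hset, Measure.prod_prod, Measure.restrict_apply measurableSet_Ioo.compl]
    simp [Set.compl_inter_self]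
  refine measure_mono_null (fun p hp => ?_) hnull
  simp only [Set.mem_setOf_eq] at hp ⊢
  intro hmem
  exact hp (hC p ⟨Set.mem_univ _, Set.Ioo_subset_Icc_self hmem⟩)

lemma basic_zero (hd : 1 ≤ d) {R : ℝ} (hR : 0 < R)
    (x : EuclideanSpace ℝ (Fin d)) (hx : ‖x‖ < R)
    (k k' : ℕ) (P : MvPolynomial (Fin d) ℝ) (hP : P.IsHomogeneous k)
    (hharm : (∑ j : Fin d, pderiv j (pderiv j P)) = 0) (hkk : k' + 2 < k) :
    ∫ p : (Metric.sphere (0 : EuclideanSpace ℝ (Fin d)) 1) × ℝ,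
        max (⟪(p.1 : EuclideanSpace ℝ (Fin d)), x⟫ - p.2) 0
          * (MvPolynomial.eval (fun l => (p.1 : EuclideanSpace ℝ (Fin d)) l) P * p.2 ^ k')
      ∂((sphereMeasure' d).prod (volume.restrict (Set.Ioo (-R) R))) = 0 := by
  classical
  haveI : IsFiniteMeasure (sphereMeasure' d) := ⟨sphereMeasure_univ_lt_top hd⟩
  haveI : IsFiniteMeasure (volume.restrict (Set.Ioo (-R) R)) :=
    ⟨by rw [Measure.restrict_apply_univ]; exact measure_Ioo_lt_top⟩
  set xc : Fin d → ℝ := fun l => x l with hxc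
  set c1 : ℝ := 1/(k'+1) - 1/(k'+2) with hc1
  set c2 : ℝ := -((-R)^(k'+1))/(k'+1) with hc2
  set c3 : ℝ := (-R)^(k'+2)/(k'+2) with hc3
  have hFc : Continuous fun p : (Metric.sphere (0 : EuclideanSpace ℝ (Fin d)) 1) × ℝ =>
      max (⟪(p.1 : EuclideanSpace ℝ (Fin d)), x⟫ - p.2) 0
        * (MvPolynomial.eval (fun l => (p.1 : EuclideanSpace ℝ (Fin d)) l) P * p.2 ^ k') := by
    refine Continuous.mul ?_ ?_
    · exact (((continuous_subtype_val.comp continuous_fst).inner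
        continuous_const).sub continuous_snd).max continuous_const
    · exact ((evalP_cont P).comp (continuous_subtype_val.comp continuous_fst)).mul
        ((continuous_pow k').comp continuous_snd)
  have hFi := integrable_on_strip hd R _ hFc
  rw [MeasureTheory.integral_prod _ hFi]
  have hinner : ∀ ω : Metric.sphere (0 : EuclideanSpace ℝ (Fin d)) 1,
      (∫ b, max (⟪(ω : EuclideanSpace ℝ (Fin d)), x⟫ - b) 0
        * (MvPolynomial.eval (fun l => (ω : EuclideanSpace ℝ (Fin d)) l) P * b ^ k')
        ∂(volume.restrict (Set.Ioo (-R) R)))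
      = MvPolynomial.eval (fun l => (ω : EuclideanSpace ℝ (Fin d)) l) P
          * (c1 * ⟪(ω : EuclideanSpace ℝ (Fin d)), x⟫ ^ (k'+2)
            + c2 * ⟪(ω : EuclideanSpace ℝ (Fin d)), x⟫ + c3) := by
    intro ω
    have hn : ‖(ω : EuclideanSpace ℝ (Fin d))‖ = 1 := mem_sphere_zero_iff_norm.mp ω.2
    have habs : |⟪(ω : EuclideanSpace ℝ (Fin d)), x⟫| ≤ R := by
      have h := abs_real_inner_le_norm (ω : EuclideanSpace ℝ (Fin d)) x
      rw [hn, one_mul] at h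
      linarith
    obtain ⟨ht1, ht2⟩ := abs_le.mp habs
    rw [show (fun b => max (⟪(ω : EuclideanSpace ℝ (Fin d)), x⟫ - b) 0
        * (MvPolynomial.eval (fun l => (ω : EuclideanSpace ℝ (Fin d)) l) P * b ^ k'))
      = fun b => MvPolynomial.eval (fun l => (ω : EuclideanSpace ℝ (Fin d)) l) P
          * (max (⟪(ω : EuclideanSpace ℝ (Fin d)), x⟫ - b) 0 * b ^ k')
      from funext fun b => by ring]
    rw [MeasureTheory.integral_const_mul, relu_int k' ht1 ht2]
  rw [MeasureTheory.integral_congr_ae (Filter.Eventually.of_forall fun ω => hinner ω)]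
  have hJ0 : ∀ j, j < k → ∫ ω, MvPolynomial.eval
      (fun l => (ω : EuclideanSpace ℝ (Fin d)) l) (P * linP xc ^ j)
      ∂(sphereMeasure' d) = 0 := by
    intro j hj
    exact sphere_int_zero hd (k + 1 * j) _ (hP.mul ((linP_homog xc).pow j))
      (mainAlg xc j k P hharm hP hj)
  have hevalmul : ∀ (ω : Metric.sphere (0 : EuclideanSpace ℝ (Fin d)) 1) (j : ℕ),
      MvPolynomial.eval (fun l => (ω : EuclideanSpace ℝ (Fin d)) l) (P * linP xc ^ j)
      = MvPolynomial.eval (fun l => (ω : EuclideanSpace ℝ (Fin d)) l) P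
          * ⟪(ω : EuclideanSpace ℝ (Fin d)), x⟫ ^ j := by
    intro ω j
    rw [map_mul, map_pow]
    congr 2
    rw [linP, map_sum, PiLp.inner_apply]
    refine Finset.sum_congr rfl fun l _ => ?_
    simp [hxc, mul_comm]
  have hsum : (fun ω : Metric.sphere (0 : EuclideanSpace ℝ (Fin d)) 1 =>
      MvPolynomial.eval (fun l => (ω : EuclideanSpace ℝ (Fin d)) l) P
        * (c1 * ⟪(ω : EuclideanSpace ℝ (Fin d)), x⟫ ^ (k'+2)
          + c2 * ⟪(ω : EuclideanSpace ℝ (Fin d)), x⟫ + c3))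
      = fun ω : Metric.sphere (0 : EuclideanSpace ℝ (Fin d)) 1 =>
        c1 * MvPolynomial.eval (fun l => (ω : EuclideanSpace ℝ (Fin d)) l)
            (P * linP xc ^ (k'+2))
        + c2 * MvPolynomial.eval (fun l => (ω : EuclideanSpace ℝ (Fin d)) l)
            (P * linP xc ^ 1)
        + c3 * MvPolynomial.eval (fun l => (ω : EuclideanSpace ℝ (Fin d)) l)
            (P * linP xc ^ 0) := by
    funext ω
    rw [hevalmul, hevalmul, hevalmul]
    simp only [pow_one, pow_zero]
    ring
  rw [hsum]
  have hint : ∀ j : ℕ, Integrable (fun ω : Metric.sphere (0 : EuclideanSpace ℝ (Fin d)) 1 =>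
      MvPolynomial.eval (fun l => (ω : EuclideanSpace ℝ (Fin d)) l) (P * linP xc ^ j))
      (sphereMeasure' d) :=
    fun j => integrable_sph hd ((evalP_cont _).comp continuous_subtype_val)
  have e1 : ∫ ω : Metric.sphere (0 : EuclideanSpace ℝ (Fin d)) 1,
        (c1 * MvPolynomial.eval (fun l => (ω : EuclideanSpace ℝ (Fin d)) l)
            (P * linP xc ^ (k'+2))
          + c2 * MvPolynomial.eval (fun l => (ω : EuclideanSpace ℝ (Fin d)) l)
            (P * linP xc ^ 1)
          + c3 * MvPolynomial.eval (fun l => (ω : EuclideanSpace ℝ (Fin d)) l)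
            (P * linP xc ^ 0)) ∂(sphereMeasure' d)
      = (∫ ω : Metric.sphere (0 : EuclideanSpace ℝ (Fin d)) 1,
          (c1 * MvPolynomial.eval (fun l => (ω : EuclideanSpace ℝ (Fin d)) l)
              (P * linP xc ^ (k'+2))
            + c2 * MvPolynomial.eval (fun l => (ω : EuclideanSpace ℝ (Fin d)) l)
              (P * linP xc ^ 1)) ∂(sphereMeasure' d))
        + ∫ ω : Metric.sphere (0 : EuclideanSpace ℝ (Fin d)) 1,
            c3 * MvPolynomial.eval (fun l => (ω : EuclideanSpace ℝ (Fin d)) l)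
              (P * linP xc ^ 0) ∂(sphereMeasure' d) :=
    MeasureTheory.integral_add (((hint (k'+2)).const_mul c1).add ((hint 1).const_mul c2))
      ((hint 0).const_mul c3)
  have e2 : ∫ ω : Metric.sphere (0 : EuclideanSpace ℝ (Fin d)) 1,
        (c1 * MvPolynomial.eval (fun l => (ω : EuclideanSpace ℝ (Fin d)) l)
            (P * linP xc ^ (k'+2))
          + c2 * MvPolynomial.eval (fun l => (ω : EuclideanSpace ℝ (Fin d)) l)
            (P * linP xc ^ 1)) ∂(sphereMeasure' d)
      = (∫ ω : Metric.sphere (0 : EuclideanSpace ℝ (Fin d)) 1,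
          c1 * MvPolynomial.eval (fun l => (ω : EuclideanSpace ℝ (Fin d)) l)
              (P * linP xc ^ (k'+2)) ∂(sphereMeasure' d))
        + ∫ ω : Metric.sphere (0 : EuclideanSpace ℝ (Fin d)) 1,
            c2 * MvPolynomial.eval (fun l => (ω : EuclideanSpace ℝ (Fin d)) l)
              (P * linP xc ^ 1) ∂(sphereMeasure' d) :=
    MeasureTheory.integral_add ((hint (k'+2)).const_mul c1) ((hint 1).const_mul c2)
  rw [e1, e2, MeasureTheory.integral_const_mul, MeasureTheory.integral_const_mul,
    MeasureTheory.integral_const_mul,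
    hJ0 (k'+2) (by omega), hJ0 1 (by omega), hJ0 0 (by omega)]
  ring

end SphFinal
/-- Integral of a real function against a finite signed measure, via its Jordan decomposition. -/
noncomputable def sInt {X : Type*} [MeasurableSpace X] (α : SignedMeasure X) (f : X → ℝ) : ℝ :=
  (∫ x, f x ∂α.toJordanDecomposition.posPart) - ∫ x, f x ∂α.toJordanDecomposition.negPart

/-- The set of functions `(ω, b) ↦ P(ω) · b^{k'}` on `S^{d-1} × ℝ`, where `P` is a harmonic
homogeneous polynomial of degree `k`, and `k ≡ k' (mod 2)` with `k' < k - 2`. -/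
def basicSet (d : ℕ) :
    Set ((Metric.sphere (0 : EuclideanSpace ℝ (Fin d)) 1 × ℝ) → ℝ) :=
  {g | ∃ (k k' : ℕ) (P : MvPolynomial (Fin d) ℝ),
    P.IsHomogeneous k ∧
    (∑ j : Fin d, MvPolynomial.pderiv j (MvPolynomial.pderiv j P)) = 0 ∧
    k % 2 = k' % 2 ∧ k' + 2 < k ∧
    g = fun p => MvPolynomial.eval (fun j => (p.1 : EuclideanSpace ℝ (Fin d)) j) P * p.2 ^ k'}

theorem stmt11 (d : ℕ) (hd : 2 ≤ d) (R : ℝ) (hR : 0 < R)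
    (α : SignedMeasure (Metric.sphere (0 : EuclideanSpace ℝ (Fin d)) 1 × ℝ))
    (hsupp : α.totalVariation
      {p : Metric.sphere (0 : EuclideanSpace ℝ (Fin d)) 1 × ℝ | p.2 ∉ Set.Ioo (-R) R} = 0)
    (h : ℕ → (Metric.sphere (0 : EuclideanSpace ℝ (Fin d)) 1 × ℝ) → ℝ)
    (hmem : ∀ m, h m ∈ Submodule.span ℝ (basicSet d))
    (hconv : ∀ ψ : Metric.sphere (0 : EuclideanSpace ℝ (Fin d)) 1 × ℝ → ℝ,
      ContinuousOn ψ (Set.univ ×ˢ Set.Ioo (-R) R) →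
      (∃ C, ∀ p ∈ Set.univ ×ˢ Set.Ioo (-R) R, |ψ p| ≤ C) →
      Tendsto (fun m => ∫ p in Set.univ ×ˢ Set.Ioo (-R) R,
          ψ p * h m p ∂((sphereMeasure d).prod volume))
        atTop (𝓝 (sInt α ψ))) :
    ∀ x ∈ Metric.ball (0 : EuclideanSpace ℝ (Fin d)) R,
      sInt α (fun p => max (⟪(p.1 : EuclideanSpace ℝ (Fin d)), x⟫ - p.2) 0) = 0 := by
  intro x hx
  have hd1 : 1 ≤ d := by omega
  have hxR : ‖x‖ < R := mem_ball_zero_iff.mp hx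
  have hmeq : sphereMeasure d = sphereMeasure' d := rfl
  haveI hfin : IsFiniteMeasure (sphereMeasure d) :=
    ⟨by rw [hmeq]; exact sphereMeasure_univ_lt_top hd1⟩
  haveI : IsFiniteMeasure (volume.restrict (Set.Ioo (-R) R)) :=
    ⟨by rw [Measure.restrict_apply_univ]; exact measure_Ioo_lt_top⟩
  set ψ : (Metric.sphere (0 : EuclideanSpace ℝ (Fin d)) 1) × ℝ → ℝ :=
    fun p => max (⟪(p.1 : EuclideanSpace ℝ (Fin d)), x⟫ - p.2) 0 with hψ
  have hψc : Continuous ψ :=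
    (((continuous_subtype_val.comp continuous_fst).inner
      continuous_const).sub continuous_snd).max continuous_const
  have hbound : ∀ p ∈ (Set.univ : Set (Metric.sphere (0 : EuclideanSpace ℝ (Fin d)) 1)) ×ˢ
      Set.Ioo (-R) R, |ψ p| ≤ ‖x‖ + R := by
    rintro p ⟨-, hp2⟩
    have hn : ‖(p.1 : EuclideanSpace ℝ (Fin d))‖ = 1 := mem_sphere_zero_iff_norm.mp p.1.2
    have h1 : |⟪(p.1 : EuclideanSpace ℝ (Fin d)), x⟫| ≤ ‖x‖ := by
      have h := abs_real_inner_le_norm (p.1 : EuclideanSpace ℝ (Fin d)) x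
      rw [hn, one_mul] at h
      exact h
    have h2 : |p.2| ≤ R := by
      rcases hp2 with ⟨ha, hb⟩
      rw [abs_le]
      constructor <;> linarith
    have h3 : |⟪(p.1 : EuclideanSpace ℝ (Fin d)), x⟫ - p.2|
        ≤ |⟪(p.1 : EuclideanSpace ℝ (Fin d)), x⟫| + |p.2| := by
      calc |⟪(p.1 : EuclideanSpace ℝ (Fin d)), x⟫ - p.2|
          = |⟪(p.1 : EuclideanSpace ℝ (Fin d)), x⟫ + -p.2| := by rw [sub_eq_add_neg]
      _ ≤ |⟪(p.1 : EuclideanSpace ℝ (Fin d)), x⟫| + |-p.2| := abs_add_le _ _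
      _ = |⟪(p.1 : EuclideanSpace ℝ (Fin d)), x⟫| + |p.2| := by rw [abs_neg]
    have hm : ψ p ≤ |⟪(p.1 : EuclideanSpace ℝ (Fin d)), x⟫ - p.2| :=
      max_le (le_abs_self _) (abs_nonneg _)
    have hnn : (0:ℝ) ≤ ψ p := le_max_right _ _
    rw [abs_of_nonneg hnn]
    calc ψ p ≤ |⟪(p.1 : EuclideanSpace ℝ (Fin d)), x⟫ - p.2| := hm
    _ ≤ |⟪(p.1 : EuclideanSpace ℝ (Fin d)), x⟫| + |p.2| := h3
    _ ≤ ‖x‖ + R := add_le_add h1 h2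
  have hspan : ∀ g, g ∈ Submodule.span ℝ (basicSet d) →
      Integrable (fun p => ψ p * g p)
        ((sphereMeasure d).prod (volume.restrict (Set.Ioo (-R) R)))
      ∧ ∫ p, ψ p * g p
          ∂((sphereMeasure d).prod (volume.restrict (Set.Ioo (-R) R))) = 0 := by
    intro g hg
    induction hg using Submodule.span_induction with
    | mem g hgmem =>
      obtain ⟨k, k', P, hP, hharm, hpar, hkk, rfl⟩ := hgmem
      constructor
      · refine integrable_on_strip hd1 R _ ?_
        exact hψc.mul
          (((evalP_cont P).comp (continuous_subtype_val.comp continuous_fst)).mul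
            ((continuous_pow k').comp continuous_snd))
      · exact basic_zero hd1 hR x hxR k k' P hP hharm hkk
    | zero =>
      have h0 : (fun p => ψ p * (0 : (Metric.sphere (0 : EuclideanSpace ℝ (Fin d)) 1) × ℝ → ℝ) p)
          = fun _ => (0:ℝ) := funext fun p => by simp
      refine ⟨?_, ?_⟩
      · rw [h0]; exact integrable_const 0
      · rw [h0]; simp
    | add f g hf hg ihf ihg =>
      have hfg : (fun p => ψ p * (f + g) p) = fun p => ψ p * f p + ψ p * g p :=
        funext fun p => by simp [mul_add]
      refine ⟨?_, ?_⟩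
      · rw [hfg]; exact ihf.1.add ihg.1
      · rw [hfg, MeasureTheory.integral_add ihf.1 ihg.1, ihf.2, ihg.2, add_zero]
    | smul a f hf ihf =>
      have hfg : (fun p => ψ p * (a • f) p) = fun p => a * (ψ p * f p) :=
        funext fun p => by simp only [Pi.smul_apply, smul_eq_mul]; ring
      refine ⟨?_, ?_⟩
      · rw [hfg]; exact ihf.1.const_mul a
      · rw [hfg, MeasureTheory.integral_const_mul, ihf.2, mul_zero]
  have hkey : ∀ m, ∫ p in Set.univ ×ˢ Set.Ioo (-R) R,
      ψ p * h m p ∂((sphereMeasure d).prod volume) = 0 := by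
    intro m
    have hre : ((sphereMeasure d).prod volume).restrict
        ((Set.univ : Set (Metric.sphere (0 : EuclideanSpace ℝ (Fin d)) 1)) ×ˢ Set.Ioo (-R) R)
        = (sphereMeasure d).prod (volume.restrict (Set.Ioo (-R) R)) := by
      rw [← Measure.prod_restrict, Measure.restrict_univ]
    rw [hre]
    exact (hspan (h m) (hmem m)).2
  have htend := hconv ψ hψc.continuousOn ⟨‖x‖ + R, hbound⟩
  rw [show (fun m => ∫ p in Set.univ ×ˢ Set.Ioo (-R) R,
      ψ p * h m p ∂((sphereMeasure d).prod volume)) = fun _ => (0:ℝ)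
    from funext hkey] at htend
  exact tendsto_nhds_unique htend tendsto_const_nhds
end

section
/- Let d ≥ 1, R > 0, n ≥ 1 and let μ be a Borel probability measure on S^{d-1} × ℝ. Let (ω_1, b_1), …, (ω_n, b_n) be i.i.d. random variables with law μ, and let σ_1, …, σ_n be i.i.d. Rademacher random variables (uniform on {−1, +1}) independent of the (ω_i, b_i). Then E[ sup_{x ∈ ℝ^d, ‖x‖₂ ≤ R} (1/n) Σ_{i=1}^n σ_i (⟨ω_i, x⟩ − b_i)_+ ] ≤ R / √n. -/
open MeasureTheory
open scoped RealInnerProductSpace ENNReal ProbabilityTheory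

universe u v

/-- A family indexed by `Fin n ⊕ Fin n` that combines two families of random variables with
(possibly) different codomains. -/
def pairFam {n : ℕ} {Ω : Type v} {A B : Type u} (X : Fin n → Ω → A) (s : Fin n → Ω → B) :
    ∀ i : Fin n ⊕ Fin n, Ω → Sum.elim (fun _ : Fin n => A) (fun _ : Fin n => B) i
  | .inl a => X a
  | .inr a => s a

/-- The canonical measurable-space structure on the combined codomains. -/
def pairMS {n : ℕ} {A B : Type u} [MeasurableSpace A] [MeasurableSpace B] :
    ∀ i : Fin n ⊕ Fin n,
      MeasurableSpace (Sum.elim (fun _ : Fin n => A) (fun _ : Fin n => B) i)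
  | .inl _ => (inferInstance : MeasurableSpace A)
  | .inr _ => (inferInstance : MeasurableSpace B)

namespace RadAux

noncomputable def sg (b : Bool) : ℝ := if b then 1 else -1

lemma sg_mul_self (b : Bool) : sg b * sg b = 1 := by cases b <;> simp [sg]

lemma sg_not (b : Bool) : sg (!b) = - sg b := by cases b <;> simp [sg]

lemma lipschitz_sg_mul (b : Bool) : LipschitzWith 1 (fun r : ℝ => sg b * r) := by
  refine LipschitzWith.of_dist_le_mul fun x y => ?_
  have h : sg b * x - sg b * y = sg b * (x - y) := by ring
  rw [Real.dist_eq, Real.dist_eq, h, abs_mul]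
  cases b <;> simp [sg]

lemma swap_sup {K : Type*} [Nonempty K] (A t : K → ℝ) (φ : ℝ → ℝ) (hφ : LipschitzWith 1 φ)
    (h1 : BddAbove (Set.range fun x => A x + t x))
    (h2 : BddAbove (Set.range fun x => A x - t x)) :
    (⨆ x, (A x + φ (t x))) + (⨆ x, (A x - φ (t x))) ≤
      (⨆ x, (A x + t x)) + (⨆ x, (A x - t x)) := by
  set M := (⨆ x, (A x + t x)) + (⨆ x, (A x - t x)) with hM
  have key : ∀ x y : K, (A x + φ (t x)) + (A y - φ (t y)) ≤ M := by
    intro x y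
    have hd : φ (t x) - φ (t y) ≤ |t x - t y| := by
      have h1' := hφ.dist_le_mul (t x) (t y)
      rw [Real.dist_eq, Real.dist_eq] at h1'
      have h2' := le_abs_self (φ (t x) - φ (t y))
      simpa using h2'.trans h1'
    rcases le_total (t y) (t x) with h | h
    · have h3 : (A x + φ (t x)) + (A y - φ (t y)) ≤ (A x + t x) + (A y - t y) := by
        rw [abs_of_nonneg (by linarith)] at hd; linarith
      exact h3.trans (add_le_add (le_ciSup h1 x) (le_ciSup h2 y))
    · have h3 : (A x + φ (t x)) + (A y - φ (t y)) ≤ (A y + t y) + (A x - t x) := by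
        rw [abs_of_nonpos (by linarith)] at hd; linarith
      exact h3.trans (add_le_add (le_ciSup h1 y) (le_ciSup h2 x))
  have h5 : (⨆ x, (A x + φ (t x))) ≤ M - ⨆ y, (A y - φ (t y)) := by
    refine ciSup_le fun x => ?_
    have h6 : (⨆ y, (A y - φ (t y))) ≤ M - (A x + φ (t x)) :=
      ciSup_le fun y => by linarith [key x y]
    linarith
  linarith

lemma contraction {K : Type*} [TopologicalSpace K] [CompactSpace K] [Nonempty K]
    {n : ℕ} (g : Fin n → K → ℝ) (hg : ∀ i, Continuous (g i))
    (φ : Fin n → ℝ → ℝ) (hφ : ∀ i, LipschitzWith 1 (φ i)) (S : Finset (Fin n)) :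
    ∑ ε : Fin n → Bool, (⨆ x : K, ∑ i, sg (ε i) * (if i ∈ S then φ i (g i x) else g i x)) ≤
      ∑ ε : Fin n → Bool, (⨆ x : K, ∑ i, sg (ε i) * g i x) := by
  classical
  induction S using Finset.induction_on with
  | empty => simp
  | @insert k S hk ih =>
    refine le_trans ?_ ih
    let term : Finset (Fin n) → Fin n → K → ℝ :=
      fun T i x => if i ∈ T then φ i (g i x) else g i x
    have hcont : ∀ T i, Continuous (term T i) := by
      intro T i
      by_cases hi : i ∈ T
      · simpa [term, hi, Function.comp_def] using ((hφ i).continuous).comp (hg i)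
      · simpa [term, hi] using hg i
    let val : Finset (Fin n) → (Fin n → Bool) → ℝ :=
      fun T ε => ⨆ x : K, ∑ i, sg (ε i) * term T i x
    show (∑ ε : Fin n → Bool, val (insert k S) ε) ≤ ∑ ε : Fin n → Bool, val S ε
    let e : (Fin n → Bool) → (Fin n → Bool) := fun ε => Function.update ε k (!ε k)
    have hek : ∀ ε, e ε k = !ε k := fun ε => Function.update_self _ _ _
    have hej : ∀ ε j, j ≠ k → e ε j = ε j := fun ε j hj => Function.update_of_ne hj _ _
    have hinv : Function.Involutive e := by
      intro ε; funext j
      rcases eq_or_ne j k with rfl | hj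
      · rw [hek, hek, Bool.not_not]
      · rw [hej _ _ hj, hej _ _ hj]
    have hsum : ∀ (f : (Fin n → Bool) → ℝ), ∑ ε, f (e ε) = ∑ ε, f ε :=
      fun f => Fintype.sum_bijective e hinv.bijective _ _ (fun ε => rfl)
    have key : ∀ ε, val (insert k S) ε + val (insert k S) (e ε) ≤ val S ε + val S (e ε) := by
      intro ε
      set A : K → ℝ := fun x => ∑ i ∈ Finset.univ.erase k, sg (ε i) * term S i x with hA
      have hAc : Continuous A :=
        continuous_finset_sum _ fun i _ => (continuous_const.mul (hcont S i))
      have hrw : ∀ (T : Finset (Fin n)) (ε' : Fin n → Bool) (c : K → ℝ),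
          (∀ j, j ≠ k → ε' j = ε j) → (∀ i, i ≠ k → term T i = term S i) →
          (∀ x, term T k x = c x) →
          val T ε' = ⨆ x : K, (A x + sg (ε' k) * c x) := by
        intro T ε' c hε' hT hc
        refine iSup_congr fun x => ?_
        rw [← Finset.sum_erase_add _ _ (Finset.mem_univ k)]
        congr 1
        · refine Finset.sum_congr rfl fun i hi => ?_
          have hik : i ≠ k := (Finset.mem_erase.mp hi).1
          rw [hε' i hik, hT i hik]
        · rw [hc]
      have hT1 : ∀ i, i ≠ k → term (insert k S) i = term S i := by
        intro i hik; funext x; simp [term, Finset.mem_insert, hik]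
      have hT2 : ∀ i, i ≠ k → term S i = term S i := fun _ _ => rfl
      have hε'e : ∀ j, j ≠ k → e ε j = ε j := fun j hj => hej ε j hj
      have v1 : val (insert k S) ε = ⨆ x : K, (A x + sg (ε k) * φ k (g k x)) :=
        hrw _ _ _ (fun _ _ => rfl) hT1 (fun x => by simp [term])
      have v2 : val (insert k S) (e ε) = ⨆ x : K, (A x - sg (ε k) * φ k (g k x)) := by
        rw [hrw _ _ (fun x => φ k (g k x)) hε'e hT1 (fun x => by simp [term])]
        refine iSup_congr fun x => ?_
        rw [hek, sg_not]; ring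
      have v3 : val S ε = ⨆ x : K, (A x + sg (ε k) * g k x) :=
        hrw _ _ _ (fun _ _ => rfl) hT2 (fun x => by simp [term, hk])
      have v4 : val S (e ε) = ⨆ x : K, (A x - sg (ε k) * g k x) := by
        rw [hrw _ _ (fun x => g k x) hε'e hT2 (fun x => by simp [term, hk])]
        refine iSup_congr fun x => ?_
        rw [hek, sg_not]; ring
      have h1 : BddAbove (Set.range fun x : K => A x + sg (ε k) * g k x) :=
        (isCompact_range (hAc.add (continuous_const.mul (hg k)))).bddAbove
      have h2 : BddAbove (Set.range fun x : K => A x - sg (ε k) * g k x) :=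
        (isCompact_range (hAc.sub (continuous_const.mul (hg k)))).bddAbove
      have hφ' : LipschitzWith 1 (fun r : ℝ => sg (ε k) * φ k (sg (ε k) * r)) := by
        have := (lipschitz_sg_mul (ε k)).comp ((hφ k).comp (lipschitz_sg_mul (ε k)))
        simpa [Function.comp_def] using this
      have main := swap_sup A (fun x => sg (ε k) * g k x)
        (fun r : ℝ => sg (ε k) * φ k (sg (ε k) * r)) hφ' h1 h2
      simp only [← mul_assoc, sg_mul_self, one_mul] at main
      rw [v1, v2, v3, v4]
      exact main
    have h2' : ∀ (T : Finset (Fin n)),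
        ∑ ε, (val T ε + val T (e ε)) = 2 * ∑ ε, val T ε := by
      intro T
      rw [Finset.sum_add_distrib, hsum (val T), two_mul]
    have hle : ∑ ε, (val (insert k S) ε + val (insert k S) (e ε)) ≤ ∑ ε, (val S ε + val S (e ε)) :=
      Finset.sum_le_sum (fun ε _ => key ε)
    rw [h2', h2'] at hle
    linarith


lemma flip_involutive {n : ℕ} (k : Fin n) :
    Function.Involutive (fun ε : Fin n → Bool => Function.update ε k (!ε k)) := by
  intro ε; funext j
  rcases eq_or_ne j k with rfl | hj
  · simp
  · simp [Function.update_of_ne hj]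

lemma sum_sg_mul_eq {n : ℕ} (i j : Fin n) :
    ∑ ε : Fin n → Bool, sg (ε i) * sg (ε j) = if i = j then (2:ℝ)^n else 0 := by
  classical
  rcases eq_or_ne i j with rfl | hij
  · simp only [sg_mul_self, if_pos rfl, Finset.sum_const, Finset.card_univ, nsmul_eq_mul, mul_one]
    simp [Fintype.card_fun]
  · have hsum : ∑ ε : Fin n → Bool,
        sg ((Function.update ε i (!ε i)) i) * sg ((Function.update ε i (!ε i)) j)
        = ∑ ε : Fin n → Bool, sg (ε i) * sg (ε j) :=
      Fintype.sum_bijective _ (flip_involutive i).bijective _ _ (fun ε => rfl)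
    have hneg : ∀ ε : Fin n → Bool,
        sg (Function.update ε i (!ε i) i) * sg (Function.update ε i (!ε i) j)
          = - (sg (ε i) * sg (ε j)) := by
      intro ε
      rw [Function.update_self, Function.update_of_ne (Ne.symm hij), sg_not]
      ring
    rw [Finset.sum_congr rfl (fun ε _ => hneg ε), Finset.sum_neg_distrib] at hsum
    rw [if_neg hij]
    linarith


lemma iSup_eq_iSup_denseSeq {K : Type*} [PseudoMetricSpace K] [CompactSpace K] [Nonempty K]
    {u : ℕ → K} (hu : DenseRange u) (f : K → ℝ) (hf : Continuous f) :
    ⨆ x, f x = ⨆ m, f (u m) := by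
  have hb : BddAbove (Set.range f) := (isCompact_range hf).bddAbove
  have hb2 : BddAbove (Set.range (f ∘ u)) :=
    hb.mono (Set.range_comp_subset_range u f)
  refine le_antisymm (ciSup_le fun x => ?_) (ciSup_le fun m => le_ciSup hb (u m))
  refine le_of_forall_pos_le_add fun ε hε => ?_
  obtain ⟨δ, hδ, hδ2⟩ := Metric.continuousAt_iff.mp hf.continuousAt ε hε
  obtain ⟨m, hm⟩ := Metric.denseRange_iff.mp hu x δ hδ
  have h1 : dist (f (u m)) (f x) < ε := hδ2 (by rwa [dist_comm] at hm)
  rw [Real.dist_eq] at h1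
  have h2 : f x ≤ f (u m) + ε := by
    have h3 := le_abs_self (f (u m) - f x)
    have h4 := neg_abs_le (f (u m) - f x)
    linarith
  exact h2.trans (add_le_add (le_ciSup hb2 m) le_rfl)

lemma pi_rademacher {n : ℕ} :
    (Measure.pi fun _ : Fin n =>
        ((2⁻¹ : ℝ≥0∞) • Measure.dirac (1 : ℝ) + (2⁻¹ : ℝ≥0∞) • Measure.dirac (-1 : ℝ)))
      = ((2:ℝ≥0∞)^n)⁻¹ • ∑ ε : Fin n → Bool, Measure.dirac (fun i => sg (ε i)) := by
  classical
  set ν : Measure ℝ := (2⁻¹ : ℝ≥0∞) • Measure.dirac (1 : ℝ) + (2⁻¹ : ℝ≥0∞) • Measure.dirac (-1 : ℝ)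
    with hν
  haveI : IsProbabilityMeasure ν := by
    constructor
    simp [hν, ENNReal.inv_two_add_inv_two]
  refine Measure.pi_eq (μ := fun _ : Fin n => ν) fun t ht => ?_
  have hmeas : MeasurableSet (Set.univ.pi t) := MeasurableSet.univ_pi ht
  rw [Measure.smul_apply, Measure.finset_sum_apply]
  have hdirac : ∀ ε : Fin n → Bool,
      Measure.dirac (fun i => sg (ε i)) (Set.univ.pi t)
        = ∏ i, (if sg (ε i) ∈ t i then (1:ℝ≥0∞) else 0) := by
    intro ε
    rw [Measure.dirac_apply' _ hmeas, Set.indicator_apply, Finset.prod_boole]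
    simp [Set.mem_univ_pi]
  rw [Finset.sum_congr rfl fun ε _ => hdirac ε]
  have hsum : ∑ ε : Fin n → Bool, ∏ i, (if sg (ε i) ∈ t i then (1:ℝ≥0∞) else 0)
      = ∏ i, ∑ b : Bool, (if sg b ∈ t i then (1:ℝ≥0∞) else 0) := by
    rw [Finset.prod_univ_sum, Fintype.piFinset_univ]
  rw [hsum]
  have hν' : ∀ i, ν (t i) = 2⁻¹ * ∑ b : Bool, (if sg b ∈ t i then (1:ℝ≥0∞) else 0) := by
    intro i
    rw [hν]
    rw [Measure.add_apply, Measure.smul_apply, Measure.smul_apply,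
      Measure.dirac_apply' _ (ht i), Measure.dirac_apply' _ (ht i)]
    rw [Fintype.sum_bool]
    simp [Set.indicator_apply, sg, mul_add, mul_ite, mul_one, mul_zero]
  rw [Finset.prod_congr rfl fun i _ => hν' i, Finset.prod_mul_distrib]
  rw [Finset.prod_const, Finset.card_univ, Fintype.card_fin]
  rw [smul_eq_mul, ENNReal.inv_pow]


lemma lipschitz_relu_shift (b : ℝ) : LipschitzWith 1 (fun t : ℝ => max (t - b) 0) := by
  refine LipschitzWith.of_dist_le_mul fun x y => ?_
  rw [Real.dist_eq, Real.dist_eq]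
  have := abs_max_sub_max_le_abs (x - b) (y - b) 0
  simpa using this

lemma main_det {d n : ℕ} (hn : 1 ≤ n) {R : ℝ} (hR : 0 < R)
    (a : Fin n → Metric.sphere (0 : EuclideanSpace ℝ (Fin d)) 1 × ℝ) :
    ∑ ε : Fin n → Bool, (⨆ x : Metric.closedBall (0 : EuclideanSpace ℝ (Fin d)) R,
        (1 / n : ℝ) * ∑ i, sg (ε i) *
          max (⟪(((a i).1 : EuclideanSpace ℝ (Fin d))), (x : EuclideanSpace ℝ (Fin d))⟫
            - (a i).2) 0)
      ≤ 2 ^ n * (R / Real.sqrt n) := by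
  classical
  set E := EuclideanSpace ℝ (Fin d)
  haveI hKne : Nonempty (Metric.closedBall (0 : E) R) :=
    ⟨⟨0, Metric.mem_closedBall_self hR.le⟩⟩
  haveI : CompactSpace (Metric.closedBall (0 : E) R) :=
    isCompact_iff_compactSpace.mp (isCompact_closedBall _ _)
  set K := Metric.closedBall (0 : E) R with hK
  set ω : Fin n → E := fun i => ((a i).1 : E) with hω
  set g : Fin n → K → ℝ := fun i x => ⟪ω i, (x : E)⟫ with hg
  have hgc : ∀ i, Continuous (g i) :=
    fun i => Continuous.inner continuous_const continuous_subtype_val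
  set φ : Fin n → ℝ → ℝ := fun i t => max (t - (a i).2) 0 with hφ
  have hφl : ∀ i, LipschitzWith 1 (φ i) := fun i => lipschitz_relu_shift _
  have hnpos : (0:ℝ) < n := by exact_mod_cast hn
  have hinvn : (0:ℝ) ≤ 1 / n := by positivity
  -- the norms of the sign sums
  have hsq : ∑ ε : Fin n → Bool, ‖∑ i, sg (ε i) • ω i‖^2 = 2^n * n := by
    have expand : ∀ ε : Fin n → Bool,
        ‖∑ i, sg (ε i) • ω i‖^2 = ∑ i, ∑ j, (sg (ε i) * sg (ε j)) * ⟪ω i, ω j⟫ := by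
      intro ε
      rw [← real_inner_self_eq_norm_sq, sum_inner]
      refine Finset.sum_congr rfl fun i _ => ?_
      rw [real_inner_smul_left, inner_sum, Finset.mul_sum]
      refine Finset.sum_congr rfl fun j _ => ?_
      rw [real_inner_smul_right]; ring
    rw [Finset.sum_congr rfl fun ε _ => expand ε]
    rw [Finset.sum_comm]
    have step : ∀ i : Fin n,
        ∑ ε : Fin n → Bool, ∑ j, (sg (ε i) * sg (ε j)) * ⟪ω i, ω j⟫
          = ∑ j, (∑ ε : Fin n → Bool, sg (ε i) * sg (ε j)) * ⟪ω i, ω j⟫ := by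
      intro i
      rw [Finset.sum_comm]
      refine Finset.sum_congr rfl fun j _ => ?_
      rw [Finset.sum_mul]
    rw [Finset.sum_congr rfl fun i _ => step i]
    have hnorm1 : ∀ i, ⟪ω i, ω i⟫ = (1:ℝ) := by
      intro i
      rw [real_inner_self_eq_norm_sq]
      have : ‖ω i‖ = 1 := by
        have h2 := (a i).1.2
        rwa [mem_sphere_zero_iff_norm] at h2
      rw [this]; norm_num
    have : ∀ i : Fin n, ∑ j, (∑ ε : Fin n → Bool, sg (ε i) * sg (ε j)) * ⟪ω i, ω j⟫
        = (2:ℝ)^n := by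
      intro i
      rw [Finset.sum_congr rfl fun j _ => by rw [sum_sg_mul_eq i j]]
      simp only [ite_mul, zero_mul, Finset.sum_ite_eq, Finset.mem_univ, if_true, hnorm1 i, mul_one]
    rw [Finset.sum_congr rfl fun i _ => this i]
    simp [mul_comm]
  have hnn : (0:ℝ) ≤ ∑ ε : Fin n → Bool, ‖∑ i, sg (ε i) • ω i‖ :=
    Finset.sum_nonneg fun ε _ => norm_nonneg _
  have hnorms : ∑ ε : Fin n → Bool, ‖∑ i, sg (ε i) • ω i‖ ≤ 2^n * Real.sqrt n := by
    have hcs := Finset.sum_mul_sq_le_sq_mul_sq Finset.univ (fun _ : Fin n → Bool => (1:ℝ))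
      (fun ε => ‖∑ i, sg (ε i) • ω i‖)
    simp only [one_mul, one_pow] at hcs
    have hcard : (∑ _ε : Fin n → Bool, (1:ℝ)) = 2^n := by
      simp [Finset.card_univ, Fintype.card_fun]
    rw [hcard, hsq] at hcs
    have h3 : (2:ℝ)^n * (2^n * n) = ((2:ℝ)^n)^2 * n := by ring
    calc ∑ ε : Fin n → Bool, ‖∑ i, sg (ε i) • ω i‖
        = Real.sqrt ((∑ ε : Fin n → Bool, ‖∑ i, sg (ε i) • ω i‖)^2) := (Real.sqrt_sq hnn).symm
      _ ≤ Real.sqrt (((2:ℝ)^n)^2 * n) := Real.sqrt_le_sqrt (by rw [← h3]; exact hcs)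
      _ = 2^n * Real.sqrt n := by
          rw [Real.sqrt_mul (by positivity), Real.sqrt_sq (by positivity)]
  have supb : ∀ ε : Fin n → Bool,
      (⨆ x : K, ∑ i, sg (ε i) * g i x) ≤ R * ‖∑ i, sg (ε i) • ω i‖ := by
    intro ε
    refine ciSup_le fun x => ?_
    have hx : ‖(x : E)‖ ≤ R := mem_closedBall_zero_iff.mp x.2
    have hrepr : ∑ i, sg (ε i) * g i x = ⟪∑ i, sg (ε i) • ω i, (x : E)⟫ := by
      rw [sum_inner]
      exact Finset.sum_congr rfl fun i _ => (real_inner_smul_left _ _ _).symm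
    rw [hrepr]
    calc ⟪∑ i, sg (ε i) • ω i, (x:E)⟫ ≤ ‖∑ i, sg (ε i) • ω i‖ * ‖(x:E)‖ :=
          real_inner_le_norm _ _
      _ ≤ ‖∑ i, sg (ε i) • ω i‖ * R := mul_le_mul_of_nonneg_left hx (norm_nonneg _)
      _ = R * ‖∑ i, sg (ε i) • ω i‖ := mul_comm _ _
  have hcontr := contraction g hgc φ hφl Finset.univ
  simp only [Finset.mem_univ, if_true] at hcontr
  calc (∑ ε : Fin n → Bool, ⨆ x : K, (1 / n : ℝ) * ∑ i, sg (ε i) * φ i (g i x))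
      = (1/n : ℝ) * ∑ ε : Fin n → Bool, ⨆ x : K, ∑ i, sg (ε i) * φ i (g i x) := by
        rw [Finset.mul_sum]
        exact Finset.sum_congr rfl fun ε _ => (Real.mul_iSup_of_nonneg hinvn _).symm
    _ ≤ (1/n : ℝ) * ∑ ε : Fin n → Bool, ⨆ x : K, ∑ i, sg (ε i) * g i x :=
        mul_le_mul_of_nonneg_left hcontr hinvn
    _ ≤ (1/n : ℝ) * ∑ ε : Fin n → Bool, R * ‖∑ i, sg (ε i) • ω i‖ :=
        mul_le_mul_of_nonneg_left (Finset.sum_le_sum fun ε _ => supb ε) hinvn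
    _ = (1/n : ℝ) * (R * ∑ ε : Fin n → Bool, ‖∑ i, sg (ε i) • ω i‖) := by
        rw [← Finset.mul_sum]
    _ ≤ (1/n : ℝ) * (R * (2^n * Real.sqrt n)) :=
        mul_le_mul_of_nonneg_left (mul_le_mul_of_nonneg_left hnorms hR.le) hinvn
    _ = 2 ^ n * (R / Real.sqrt n) := by
        have hs : Real.sqrt n * Real.sqrt n = (n:ℝ) := Real.mul_self_sqrt (by positivity)
        have hspos : (0:ℝ) < Real.sqrt n := Real.sqrt_pos.mpr hnpos
        field_simp
        linear_combination hs


lemma integrable_dirac'' {α : Type*} [MeasurableSpace α] {f : α → ℝ} (hf : Measurable f)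
    (x : α) : Integrable f (Measure.dirac x) := by
  refine ⟨hf.aestronglyMeasurable, ?_⟩
  rw [HasFiniteIntegral, lintegral_dirac' x hf.enorm]
  exact ENNReal.coe_lt_top

end RadAux

open RadAux

set_option maxHeartbeats 1000000 in
set_option synthInstance.maxHeartbeats 400000 in
/-- Rademacher complexity bound: the `(X i)` are i.i.d. with law `μ`, the `(s i)` are i.i.d.
Rademacher signs, and the whole family is independent. -/
theorem stmt14 (d n : ℕ) (hd : 1 ≤ d) (hn : 1 ≤ n) (R : ℝ) (hR : 0 < R)
    (μ : Measure (Metric.sphere (0 : EuclideanSpace ℝ (Fin d)) 1 × ℝ))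
    [IsProbabilityMeasure μ]
    (Ω : Type) [MeasureSpace Ω] [IsProbabilityMeasure (ℙ : Measure Ω)]
    (X : Fin n → Ω → Metric.sphere (0 : EuclideanSpace ℝ (Fin d)) 1 × ℝ)
    (s : Fin n → Ω → ℝ)
    (hXmeas : ∀ i, Measurable (X i)) (hsmeas : ∀ i, Measurable (s i))
    (hXlaw : ∀ i, Measure.map (X i) ℙ = μ)
    (hslaw : ∀ i, Measure.map (s i) ℙ =
      (2⁻¹ : ℝ≥0∞) • Measure.dirac (1 : ℝ) + (2⁻¹ : ℝ≥0∞) • Measure.dirac (-1 : ℝ))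
    (hindep : ProbabilityTheory.iIndepFun (m := pairMS) (pairFam X s) ℙ) :
    (∫ (ω : Ω), (⨆ x : Metric.closedBall (0 : EuclideanSpace ℝ (Fin d)) R,
        (1 / n : ℝ) * ∑ i, s i ω *
          max (⟪(((X i ω).1 : EuclideanSpace ℝ (Fin d))), (x : EuclideanSpace ℝ (Fin d))⟫
            - (X i ω).2) 0) ∂(ℙ : Measure Ω)) ≤ R / Real.sqrt n := by
  classical
  have hRsn : (0:ℝ) < R / Real.sqrt n := by
    have : (0:ℝ) < Real.sqrt n := Real.sqrt_pos.mpr (by exact_mod_cast hn)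
    positivity
  haveI hKne : Nonempty (Metric.closedBall (0 : EuclideanSpace ℝ (Fin d)) R) :=
    ⟨⟨0, Metric.mem_closedBall_self hR.le⟩⟩
  haveI : CompactSpace (Metric.closedBall (0 : EuclideanSpace ℝ (Fin d)) R) :=
    isCompact_iff_compactSpace.mp (isCompact_closedBall _ _)
  set ν : Measure ℝ :=
    (2⁻¹ : ℝ≥0∞) • Measure.dirac (1 : ℝ) + (2⁻¹ : ℝ≥0∞) • Measure.dirac (-1 : ℝ) with hνdef
  haveI hνprob : IsProbabilityMeasure ν := by
    constructor
    simp [hνdef, ENNReal.inv_two_add_inv_two]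
  -- the functional
  set F : (Fin n → Metric.sphere (0 : EuclideanSpace ℝ (Fin d)) 1 × ℝ) × (Fin n → ℝ) → ℝ := fun p =>
    ⨆ x : Metric.closedBall (0 : EuclideanSpace ℝ (Fin d)) R, (1 / n : ℝ) * ∑ i, p.2 i *
      max (⟪((p.1 i).1 : EuclideanSpace ℝ (Fin d)), (x : EuclideanSpace ℝ (Fin d))⟫
        - (p.1 i).2) 0 with hF
  have hFcont : ∀ p : (Fin n → Metric.sphere (0 : EuclideanSpace ℝ (Fin d)) 1 × ℝ) × (Fin n → ℝ),
      Continuous fun x : Metric.closedBall (0 : EuclideanSpace ℝ (Fin d)) R =>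
        (1 / n : ℝ) * ∑ i, p.2 i *
          max (⟪((p.1 i).1 : EuclideanSpace ℝ (Fin d)), (x : EuclideanSpace ℝ (Fin d))⟫
            - (p.1 i).2) 0 := by
    intro p
    refine continuous_const.mul (continuous_finset_sum _ fun i _ => continuous_const.mul ?_)
    exact ((Continuous.inner continuous_const continuous_subtype_val).sub
      continuous_const).max continuous_const
  have hFmeas : Measurable F := by
    set u : ℕ → Metric.closedBall (0 : EuclideanSpace ℝ (Fin d)) R :=
      TopologicalSpace.denseSeq _ with hu
    have hud : DenseRange u := TopologicalSpace.denseRange_denseSeq _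
    have hFrep : F = fun p => ⨆ m : ℕ, (1 / n : ℝ) * ∑ i, p.2 i *
        max (⟪((p.1 i).1 : EuclideanSpace ℝ (Fin d)), ((u m : Metric.closedBall (0 : EuclideanSpace ℝ (Fin d)) R) : EuclideanSpace ℝ (Fin d))⟫
          - (p.1 i).2) 0 :=
      funext fun p => iSup_eq_iSup_denseSeq hud _ (hFcont p)
    rw [hFrep]
    refine Measurable.iSup fun m => ?_
    refine measurable_const.mul (Finset.measurable_sum _ fun i _ => ?_)
    refine Measurable.mul ((measurable_pi_apply i).comp measurable_snd) ?_
    refine Measurable.max (Measurable.sub ?_ ?_) measurable_const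
    · have m1 : Measurable fun p : (Fin n → Metric.sphere (0 : EuclideanSpace ℝ (Fin d)) 1 × ℝ) × (Fin n → ℝ) =>
          (((p.1 i).1 : Metric.sphere (0 : EuclideanSpace ℝ (Fin d)) 1) : EuclideanSpace ℝ (Fin d)) :=
        continuous_subtype_val.measurable.comp
          (measurable_fst.comp ((measurable_pi_apply i).comp measurable_fst))
      exact (Continuous.inner continuous_id continuous_const).measurable.comp m1
    · exact measurable_snd.comp ((measurable_pi_apply i).comp measurable_fst)
  -- joint law
  letI mS : ∀ i : Fin n ⊕ Fin n,
      MeasurableSpace (Sum.elim (fun _ : Fin n => Metric.sphere (0 : EuclideanSpace ℝ (Fin d)) 1 × ℝ) (fun _ : Fin n => ℝ) i) := pairMS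
  set U : Ω → ∀ i : Fin n ⊕ Fin n, Sum.elim (fun _ : Fin n => Metric.sphere (0 : EuclideanSpace ℝ (Fin d)) 1 × ℝ) (fun _ : Fin n => ℝ) i :=
    fun ω i => pairFam X s i ω with hU
  have hpairmeas : ∀ i, Measurable (pairFam X s i) := by
    intro i
    cases i with
    | inl a => exact hXmeas a
    | inr a => exact hsmeas a
  have hUmeas : Measurable U := measurable_pi_iff.mpr hpairmeas
  set marg : ∀ i : Fin n ⊕ Fin n,
      Measure (Sum.elim (fun _ : Fin n => Metric.sphere (0 : EuclideanSpace ℝ (Fin d)) 1 × ℝ) (fun _ : Fin n => ℝ) i) :=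
    fun i => Measure.map (pairFam X s i) ℙ with hmarg
  haveI hmargp : ∀ i, IsProbabilityMeasure (marg i) :=
    fun i => Measure.isProbabilityMeasure_map (hpairmeas i).aemeasurable
  haveI : ∀ i, SigmaFinite (marg i) := fun i => inferInstance
  have hlaw : Measure.map U ℙ = Measure.pi marg := by
    refine (Measure.pi_eq fun t ht => ?_).symm
    rw [Measure.map_apply hUmeas (MeasurableSet.univ_pi ht)]
    have hpre : U ⁻¹' (Set.univ.pi t) = ⋂ i, (pairFam X s i) ⁻¹' (t i) := by
      ext ω
      simp [hU, Set.mem_univ_pi, Set.mem_iInter]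
    rw [hpre, hindep.meas_iInter fun i => ⟨t i, ht i, rfl⟩]
    exact Finset.prod_congr rfl fun i _ =>
      (Measure.map_apply (hpairmeas i) (ht i)).symm
  have hXY : (fun i : Fin n => marg (.inl i)) = fun _ : Fin n => μ :=
    funext fun i => hXlaw i
  have hsY : (fun i : Fin n => marg (.inr i)) = fun _ : Fin n => ν :=
    funext fun i => hslaw i
  set e := MeasurableEquiv.sumPiEquivProdPi
    (Sum.elim (fun _ : Fin n => Metric.sphere (0 : EuclideanSpace ℝ (Fin d)) 1 × ℝ) (fun _ : Fin n => ℝ)) with he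
  have hMP := MeasureTheory.measurePreserving_sumPiEquivProdPi_symm marg
  have hMPe : MeasurePreserving (⇑e) (Measure.pi marg)
      ((Measure.pi fun i => marg (.inl i)).prod (Measure.pi fun i => marg (.inr i))) := by
    have h2 := hMP.symm e.symm
    exact h2
  set πprod := ((Measure.pi fun _ : Fin n => μ).prod (Measure.pi fun _ : Fin n => ν)) with hπprod
  have hint : (∫ (ω : Ω), (⨆ x : Metric.closedBall (0 : EuclideanSpace ℝ (Fin d)) R,
        (1 / n : ℝ) * ∑ i, s i ω *
          max (⟪(((X i ω).1 : EuclideanSpace ℝ (Fin d))), (x : EuclideanSpace ℝ (Fin d))⟫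
            - (X i ω).2) 0) ∂(ℙ : Measure Ω)) = ∫ p, F p ∂πprod := by
    calc (∫ (ω : Ω), (⨆ x : Metric.closedBall (0 : EuclideanSpace ℝ (Fin d)) R,
        (1 / n : ℝ) * ∑ i, s i ω *
          max (⟪(((X i ω).1 : EuclideanSpace ℝ (Fin d))), (x : EuclideanSpace ℝ (Fin d))⟫
            - (X i ω).2) 0) ∂(ℙ : Measure Ω))
        = ∫ u, F (e u) ∂(Measure.map U ℙ) :=
          (integral_map hUmeas.aemeasurable
            (hFmeas.comp e.measurable).aestronglyMeasurable).symm
      _ = ∫ u, F (e u) ∂(Measure.pi marg) := by rw [hlaw]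
      _ = ∫ p, F p ∂((Measure.pi fun i => marg (.inl i)).prod
            (Measure.pi fun i => marg (.inr i))) :=
          hMPe.integral_comp e.measurableEmbedding _
      _ = ∫ p, F p ∂πprod := by rw [hXY, hsY]; rfl
  rw [hint]
  haveI : IsProbabilityMeasure (Measure.pi fun _ : Fin n => μ) := by infer_instance
  haveI : IsProbabilityMeasure (Measure.pi fun _ : Fin n => ν) := by infer_instance
  by_cases hInt : Integrable F πprod
  swap
  · rw [integral_undef hInt]; exact hRsn.le
  rw [hπprod, MeasureTheory.integral_prod F (hπprod ▸ hInt)]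
  have hinner : ∀ a : Fin n → Metric.sphere (0 : EuclideanSpace ℝ (Fin d)) 1 × ℝ,
      ∫ σ, F (a, σ) ∂(Measure.pi fun _ : Fin n => ν) ≤ R / Real.sqrt n := by
    intro a
    have hFa : Measurable fun σ : Fin n → ℝ => F (a, σ) :=
      hFmeas.comp measurable_prodMk_left
    rw [hνdef, pi_rademacher, integral_smul_measure,
      integral_finset_sum_measure (fun ε _ => integrable_dirac'' hFa _)]
    rw [Finset.sum_congr rfl fun ε _ => integral_dirac' _ _ hFa.stronglyMeasurable]
    have htr : ((2:ℝ≥0∞)^n)⁻¹.toReal = ((2:ℝ)^n)⁻¹ := by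
      rw [ENNReal.toReal_inv]; norm_num
    rw [htr, smul_eq_mul]
    have hmd := main_det (d := d) hn hR a
    calc ((2:ℝ)^n)⁻¹ * ∑ ε : Fin n → Bool, F (a, fun i => sg (ε i))
        ≤ ((2:ℝ)^n)⁻¹ * (2 ^ n * (R / Real.sqrt n)) := by
          refine mul_le_mul_of_nonneg_left ?_ (by positivity)
          exact hmd
      _ = R / Real.sqrt n := by
          rw [inv_mul_cancel_left₀ (by positivity)]
  have houter : ∫ a, (∫ σ, F (a, σ) ∂(Measure.pi fun _ : Fin n => ν))
      ∂(Measure.pi fun _ : Fin n => μ) ≤ R / Real.sqrt n := by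
    have h1 : Integrable (fun a => ∫ σ, F (a, σ) ∂(Measure.pi fun _ : Fin n => ν))
        (Measure.pi fun _ : Fin n => μ) := (hπprod ▸ hInt).integral_prod_left
    calc ∫ a, (∫ σ, F (a, σ) ∂(Measure.pi fun _ : Fin n => ν))
          ∂(Measure.pi fun _ : Fin n => μ)
        ≤ ∫ _a, (R / Real.sqrt n) ∂(Measure.pi fun _ : Fin n => μ) :=
          integral_mono h1 (integrable_const _) fun a => hinner a
      _ = R / Real.sqrt n := by simp
  exact houter
end
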